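/- arXiv:1307.5401 — 12 statements merged into one kernel-verified Lean document; each statement's English description precedes it below -/
import Mathlib

section
/- Let R be a commutative ring with unity. If there exists a proper ideal I of R with I not contained in J(R) such that I + J = R for every proper ideal J of R with J not contained in J(R) and J ≠ I (i.e., Γ(R) has a vertex adjacent to all other vertices), then R is isomorphic as a ring to the direct product S × K of a commutative local ring S and a field K. -/
/-- If the co-maximal ideal graph `Γ(R)` has a vertex adjacent to all other vertices
(a proper ideal `I ⊄ J(R)` with `I + J = R` for every other proper ideal `J ⊄ J(R)`),
then `R` is isomorphic to the direct product of a local ring and a field. -/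
theorem comaximal_graph_vertex_adjacent_all_iff_local_times_field
    (R : Type) [CommRing R]
    (h : ∃ I : Ideal R, I ≠ ⊤ ∧ ¬ I ≤ Ideal.jacobson (⊥ : Ideal R) ∧
      ∀ J : Ideal R, J ≠ ⊤ → ¬ J ≤ Ideal.jacobson (⊥ : Ideal R) → J ≠ I → I ⊔ J = ⊤) :
    ∃ (S : Type) (_ : CommRing S) (_ : IsLocalRing S) (K : Type) (_ : Field K),
      Nonempty (R ≃+* S × K) := by
  obtain ⟨I, hItop, hIJac, hadj⟩ := h
  -- the jacobson radical is below every maximal ideal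
  have hJacLe : ∀ P : Ideal R, P.IsMaximal → Ideal.jacobson (⊥ : Ideal R) ≤ P := by
    intro P hP
    exact sInf_le ⟨bot_le, hP⟩
  -- Step 1 : I is maximal
  have hImax : I.IsMaximal := by
    obtain ⟨M, hMmax, hIM⟩ := Ideal.exists_le_maximal I hItop
    rcases eq_or_ne M I with rfl | hne
    · exact hMmax
    · exfalso
      have hMJac : ¬ M ≤ Ideal.jacobson (⊥ : Ideal R) := fun hM => hIJac (hIM.trans hM)
      have := hadj M hMmax.ne_top hMJac hne
      rw [sup_eq_right.mpr hIM] at this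
      exact hMmax.ne_top this
  -- Step 2 : a maximal ideal M with ¬ I ≤ M
  have : ∃ M : Ideal R, M.IsMaximal ∧ ¬ I ≤ M := by
    by_contra hc
    push_neg at hc
    exact hIJac (le_sInf fun P hP => hc P hP.2)
  obtain ⟨M, hMmax, hIMne⟩ := this
  have hMneI : M ≠ I := fun e => hIMne (e ▸ le_rfl)
  -- Step 3 : every maximal ideal is I or M
  have hmax2 : ∀ P : Ideal R, P.IsMaximal → P = I ∨ P = M := by
    intro P hP
    by_contra hc
    push_neg at hc
    obtain ⟨hPI, hPM⟩ := hc
    have hJ1 : (I ⊓ M) ≠ ⊤ := fun e => hItop (top_le_iff.mp (e ▸ inf_le_left))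
    have hJ3 : (I ⊓ M) ≠ I := by
      intro e
      exact hIMne (le_of_eq e.symm |>.trans inf_le_right)
    have hJ2 : ¬ (I ⊓ M) ≤ Ideal.jacobson (⊥ : Ideal R) := by
      intro hle
      have h1 : I * M ≤ P := le_trans Ideal.mul_le_inf (hle.trans (hJacLe P hP))
      rcases (Ideal.IsPrime.mul_le hP.isPrime).mp h1 with h2 | h2
      · exact hPI (hImax.eq_of_le hP.ne_top h2).symm
      · exact hPM (hMmax.eq_of_le hP.ne_top h2).symm
    have := hadj _ hJ1 hJ2 hJ3
    rw [sup_eq_left.mpr inf_le_left] at this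
    exact hItop this
  -- Step 4 : any element of I not in M generates I
  obtain ⟨x, hxI, hxM⟩ := Set.not_subset.mp hIMne
  have hgen : ∀ y : R, y ∈ I → y ∉ M → Ideal.span {y} = I := by
    intro y hyI hyM
    have hle : Ideal.span {y} ≤ I := Ideal.span_le.mpr (by simpa using hyI)
    by_contra hne
    have h1 : Ideal.span {y} ≠ ⊤ := fun e => hItop (top_le_iff.mp (e ▸ hle))
    have h2 : ¬ Ideal.span {y} ≤ Ideal.jacobson (⊥ : Ideal R) := by
      intro hle'
      exact hyM ((hle'.trans (hJacLe M hMmax)) (Ideal.mem_span_singleton_self y))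
    have := hadj _ h1 h2 hne
    rw [sup_eq_left.mpr hle] at this
    exact hItop this
  -- Step 5 : x = x² * r for some r
  have hx2M : x * x ∉ M := fun hm => by
    rcases (hMmax.isPrime.mem_or_mem hm) with h' | h' <;> exact hxM h'
  have hx2gen : Ideal.span {x * x} = I := hgen _ (Ideal.mul_mem_left _ _ hxI) hx2M
  have hxmem : x ∈ Ideal.span {x * x} := hx2gen ▸ hxI
  obtain ⟨r, hr⟩ := Ideal.mem_span_singleton'.mp hxmem
  -- e := r * x is idempotent and generates I
  set e : R := r * x with he
  have hee : e * e = e := by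
    have : r * (x * x) = x := hr
    calc e * e = r * (r * (x * x)) := by ring
    _ = r * x := by rw [this]
  have heI : e ∈ I := Ideal.mul_mem_left _ _ hxI
  have hxe : x * e = x := by
    have : r * (x * x) = x := hr
    calc x * e = r * (x * x) := by ring
    _ = x := this
  have hIe : I = Ideal.span {e} := by
    apply le_antisymm
    · rw [← hgen x hxI hxM, Ideal.span_le]
      simp only [Set.singleton_subset_iff, SetLike.mem_coe]
      exact Ideal.mem_span_singleton'.mpr ⟨x, hxe⟩
    · rw [Ideal.span_le]
      simpa using heI
  -- the complementary ideal N
  set N : Ideal R := Ideal.span {1 - e} with hN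
  have hsup : I ⊔ N = ⊤ := by
    rw [Ideal.eq_top_iff_one]
    exact Submodule.mem_sup.mpr ⟨e, heI, 1 - e, Ideal.mem_span_singleton_self _, by ring⟩
  have hinf : I ⊓ N = ⊥ := by
    apply eq_bot_iff.mpr
    intro y hy
    obtain ⟨hyI, hyN⟩ := hy
    rw [hIe] at hyI
    obtain ⟨a, ha⟩ := Ideal.mem_span_singleton'.mp hyI
    obtain ⟨b, hb⟩ := Ideal.mem_span_singleton'.mp hyN
    have : y * e = y := by rw [← ha]; calc a * e * e = a * (e * e) := by ring
                                                     _ = a * e := by rw [hee]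
    have h0 : y * e = 0 := by rw [← hb]; calc b * (1 - e) * e = b * (e - e * e) := by ring
                                                               _ = 0 := by rw [hee]; ring
    simp only [Ideal.mem_bot]
    rw [← this, h0]
  -- N is proper
  have hNtop : N ≠ ⊤ := by
    intro htop
    have : I = ⊥ := by
      rw [← hinf, htop, inf_top_eq]
    rw [this] at hIJac
    exact hIJac bot_le
  -- S := R ⧸ N is local
  have hSlocal : IsLocalRing (R ⧸ N) := by
    apply IsLocalRing.of_unique_max_ideal
    have hnt : Nontrivial (R ⧸ N) := Ideal.Quotient.nontrivial_iff.mpr hNtop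
    obtain ⟨m, hm⟩ := Ideal.exists_maximal (R ⧸ N)
    refine ⟨m, hm, fun m' hm' => ?_⟩
    have key : ∀ (q : Ideal (R ⧸ N)), q.IsMaximal →
        Ideal.comap (Ideal.Quotient.mk N) q = M := by
      intro q hq
      haveI := hq
      have hqmax : (Ideal.comap (Ideal.Quotient.mk N) q).IsMaximal :=
        Ideal.comap_isMaximal_of_surjective (Ideal.Quotient.mk N)
          Ideal.Quotient.mk_surjective
      have hNle : N ≤ Ideal.comap (Ideal.Quotient.mk N) q := by
        intro y hy
        simp only [Ideal.mem_comap]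
        rw [Ideal.Quotient.eq_zero_iff_mem.mpr hy]
        exact q.zero_mem
      rcases hmax2 _ hqmax with hI' | hM'
      · exfalso
        have h1e : (1 : R) - e ∈ I := hI' ▸ hNle (Ideal.mem_span_singleton_self _)
        have : (1 : R) ∈ I := by
          have := I.add_mem h1e heI
          simpa using this
        exact hItop (Ideal.eq_top_iff_one I |>.mpr this)
      · exact hM'
    have := (key m hm).trans (key m' hm').symm
    exact (Ideal.comap_injective_of_surjective (Ideal.Quotient.mk N)
      Ideal.Quotient.mk_surjective this).symm
  -- assemble
  haveI := hImax
  have hcop : IsCoprime N I := Ideal.isCoprime_iff_sup_eq.mpr (by rw [sup_comm]; exact hsup)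
  have hinf' : N ⊓ I = ⊥ := by rw [inf_comm]; exact hinf
  have E : R ≃+* (R ⧸ N) × (R ⧸ I) :=
    (RingEquiv.quotientBot R).symm.trans
      ((Ideal.quotEquivOfEq hinf'.symm).trans (Ideal.quotientInfEquivQuotientProd N I hcop))
  exact ⟨R ⧸ N, inferInstance, hSlocal, R ⧸ I, Ideal.Quotient.field I, ⟨E⟩⟩
end

section
/- Let S be a commutative local ring, K a field, and R = S × K. Then the ideal S × 0 of R is a proper ideal not contained in J(R), and for every proper ideal L of R with L not contained in J(R) and L ≠ S × 0, one has (S × 0) + L = R; that is, S × 0 is a vertex of Γ(R) adjacent to all other vertices. -/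
/-- If `S` is a local commutative ring, `K` is a field and `R = S × K`, then the ideal
`S × 0` is a proper ideal of `R` not contained in `J(R)`, and it is comaximal with every
other proper ideal `L ⊄ J(R)`; i.e. `S × 0` is a vertex of `Γ(R)` adjacent to all
other vertices. -/
theorem prod_top_bot_adjacent_all (S : Type) [CommRing S] [IsLocalRing S]
    (K : Type) [Field K] :
    (Ideal.prod (⊤ : Ideal S) (⊥ : Ideal K)) ≠ ⊤ ∧
    ¬ (Ideal.prod (⊤ : Ideal S) (⊥ : Ideal K)) ≤ Ideal.jacobson (⊥ : Ideal (S × K)) ∧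
    ∀ L : Ideal (S × K), L ≠ ⊤ → ¬ L ≤ Ideal.jacobson (⊥ : Ideal (S × K)) →
      L ≠ Ideal.prod (⊤ : Ideal S) (⊥ : Ideal K) →
      (Ideal.prod (⊤ : Ideal S) (⊥ : Ideal K)) ⊔ L = ⊤ := by
  refine ⟨?_, ?_, ?_⟩
  · intro h
    have : ((0 : S), (1 : K)) ∈ Ideal.prod (⊤ : Ideal S) (⊥ : Ideal K) := by
      rw [h]; trivial
    have h2 : (1 : K) ∈ (⊥ : Ideal K) := ((Ideal.mem_prod _ _).mp this).2
    rw [Ideal.mem_bot] at h2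
    exact one_ne_zero h2
  · intro h
    have hmem : ((1 : S), (0 : K)) ∈ Ideal.prod (⊤ : Ideal S) (⊥ : Ideal K) :=
      (Ideal.mem_prod _ _).mpr ⟨trivial, rfl⟩
    have := Ideal.mem_jacobson_bot.mp (h hmem) ((-1 : S), (0 : K))
    have h01 : IsUnit ((0 : S), (1 : K)) := by
      have e : ((0 : S), (1 : K)) = ((1 : S), (0 : K)) * ((-1 : S), (0 : K)) + 1 := by
        ext <;> simp
      rw [e]; exact this
    have : IsUnit (0 : S) := h01.map (RingHom.fst S K)
    exact not_isUnit_zero this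
  · intro L hL hLJ hLne
    have hrep := Ideal.ideal_prod_eq L
    set A := L.map (RingHom.fst S K) with hA
    set B := L.map (RingHom.snd S K) with hB
    rcases B.eq_bot_or_top with hBbot | hBtop
    · -- then L = prod A ⊥; A ≠ ⊤ leads to L ≤ jacobson, A = ⊤ leads to L = prod ⊤ ⊥
      by_cases hAtop : A = ⊤
      · exact absurd (by rw [hrep, hAtop, hBbot]) hLne
      · exfalso
        apply hLJ
        intro x hx
        rw [hrep, hBbot] at hx
        obtain ⟨hx1, hx2⟩ := (Ideal.mem_prod _ _).mp hx
        have hx1m : x.1 ∈ IsLocalRing.maximalIdeal S := IsLocalRing.le_maximalIdeal hAtop hx1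
        rw [Ideal.mem_jacobson_bot]
        intro y
        have h1 : IsUnit (x.1 * y.1 + 1) := by
          by_contra hnu
          have : x.1 * y.1 + 1 ∈ IsLocalRing.maximalIdeal S := by
            rwa [IsLocalRing.mem_maximalIdeal, mem_nonunits_iff]
          have : (1 : S) ∈ IsLocalRing.maximalIdeal S := by
            have hm : x.1 * y.1 ∈ IsLocalRing.maximalIdeal S :=
              Ideal.mul_mem_right _ _ hx1m
            simpa using Ideal.sub_mem _ this hm
          exact (IsLocalRing.maximalIdeal.isMaximal S).ne_top (Ideal.eq_top_of_isUnit_mem _ this isUnit_one)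
        have h2 : IsUnit (x.2 * y.2 + 1) := by
          have : x.2 = 0 := by simpa using hx2
          simp [this]
        obtain ⟨u1, hu1⟩ := h1
        obtain ⟨u2, hu2⟩ := h2
        exact isUnit_iff_exists_inv.mpr ⟨(↑u1⁻¹, ↑u2⁻¹), by
          ext <;> simp [← hu1, ← hu2]⟩
    · -- B = ⊤ : sup = prod ⊤ ⊤ = ⊤
      rw [hrep, hBtop]
      rw [Ideal.eq_top_iff_one]
      have h1 : ((1 : S), (0 : K)) ∈ Ideal.prod (⊤ : Ideal S) (⊥ : Ideal K) ⊔ Ideal.prod A ⊤ :=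
        Ideal.mem_sup_left ((Ideal.mem_prod _ _).mpr ⟨trivial, rfl⟩)
      have h2 : ((0 : S), (1 : K)) ∈ Ideal.prod (⊤ : Ideal S) (⊥ : Ideal K) ⊔ Ideal.prod A ⊤ :=
        Ideal.mem_sup_right ((Ideal.mem_prod _ _).mpr ⟨A.zero_mem, trivial⟩)
      have := Ideal.add_mem _ h1 h2
      have h3 : ((1 : S), (1 : K)) ∈ Ideal.prod (⊤ : Ideal S) (⊥ : Ideal K) ⊔ Ideal.prod A ⊤ := by
        simpa using this
      exact h3
end

section
/- Let R be a commutative ring with unity such that Γ(R) is an infinite star graph, i.e., the set of vertices of Γ(R) is infinite, there is a vertex c adjacent to every other vertex, and no two vertices distinct from c are adjacent. Then R is isomorphic as a ring to the direct product of a field and a commutative local ring. -/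
/-- If the co-maximal ideal graph `Γ(R)` is an infinite star graph (the vertex set is
infinite, some vertex `c` is adjacent to every other vertex, and no two vertices other
than `c` are adjacent), then `R` is isomorphic to the direct product of a field and a
local ring. -/
theorem comaximal_graph_infinite_star (R : Type) [CommRing R]
    (hinf : {I : Ideal R | I ≠ ⊤ ∧ ¬ I ≤ Ideal.jacobson (⊥ : Ideal R)}.Infinite)
    (c : Ideal R) (hc : c ≠ ⊤ ∧ ¬ c ≤ Ideal.jacobson (⊥ : Ideal R))
    (hcenter : ∀ J : Ideal R, J ≠ ⊤ → ¬ J ≤ Ideal.jacobson (⊥ : Ideal R) → J ≠ c →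
      c ⊔ J = ⊤)
    (hstar : ∀ I J : Ideal R, I ≠ ⊤ → ¬ I ≤ Ideal.jacobson (⊥ : Ideal R) →
      J ≠ ⊤ → ¬ J ≤ Ideal.jacobson (⊥ : Ideal R) → I ≠ c → J ≠ c → I ≠ J →
      I ⊔ J ≠ ⊤) :
    ∃ (K : Type) (_ : Field K) (S : Type) (_ : CommRing S) (_ : IsLocalRing S),
      Nonempty (R ≃+* K × S) := by
  classical
  obtain ⟨hcT, hcJ⟩ := hc
  -- a maximal ideal above c
  obtain ⟨M, hM, hcM⟩ := Ideal.exists_le_maximal c hcT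
  -- a maximal ideal not above c
  have : ¬ ∀ m : Ideal R, m.IsMaximal → c ≤ m := by
    intro h
    exact hcJ (le_sInf (fun m hm => h m hm.2))
  push_neg at this
  obtain ⟨m₂, hm₂, hcm₂⟩ := this
  have hm₂T : m₂ ≠ ⊤ := hm₂.ne_top
  have hm₂c : m₂ ≠ c := fun h => hcm₂ (h ▸ le_rfl)
  -- jacobson ⊥ ≤ every maximal ideal
  have hJle : ∀ m : Ideal R, m.IsMaximal → Ideal.jacobson (⊥ : Ideal R) ≤ m :=
    fun m hm => sInf_le ⟨bot_le, hm⟩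
  have hm₂J : ¬ m₂ ≤ Ideal.jacobson (⊥ : Ideal R) := by
    intro h
    have : m₂ = M := hm₂.eq_of_le hM.ne_top (h.trans (hJle M hM))
    exact hcm₂ (this ▸ hcM)
  -- c ⊔ m₂ = ⊤
  have hsup : c ⊔ m₂ = ⊤ := hcenter m₂ hm₂T hm₂J hm₂c
  -- uniqueness of m₂ among maximal ideals ≠ c
  have huniq : ∀ m : Ideal R, m.IsMaximal → m ≠ c → m = m₂ := by
    intro m hm hmc
    by_cases hJ : m ≤ Ideal.jacobson (⊥ : Ideal R)
    · exact hm.eq_of_le hm₂T (hJ.trans (hJle m₂ hm₂))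
    · by_contra hne
      exact hstar m m₂ hm.ne_top hJ hm₂T hm₂J hmc hm₂c hne
        (Ideal.IsMaximal.coprime_of_ne hm hm₂ hne)
  -- c is maximal
  have hcmax : c.IsMaximal := by
    by_cases h : M = c
    · exact h ▸ hM
    · exact absurd ((huniq M hM h) ▸ hcM) hcm₂
  -- key: every proper ideal not contained in m₂ is c
  have hkey : ∀ I : Ideal R, I ≠ ⊤ → ¬ I ≤ m₂ → I = c := by
    intro I hIT hIm₂
    have hIJ : ¬ I ≤ Ideal.jacobson (⊥ : Ideal R) :=
      fun h => hIm₂ (h.trans (hJle m₂ hm₂))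
    by_contra hIc
    have hIsup : c ⊔ I = ⊤ := hcenter I hIT hIJ hIc
    obtain ⟨m, hm, hIm⟩ := Ideal.exists_le_maximal I hIT
    by_cases hmc : m = c
    · subst hmc
      rw [sup_eq_left.mpr hIm] at hIsup
      exact hm.ne_top hIsup
    · exact hIm₂ ((huniq m hm hmc) ▸ hIm)
  -- an element of c not in m₂
  have hcnle : ¬ c ≤ m₂ := by
    intro h
    rw [sup_eq_right.mpr h] at hsup
    exact hm₂T hsup
  obtain ⟨x, hxc, hxm₂⟩ := Set.not_subset.mp hcnle
  -- span {x} = c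
  have hspanx : Ideal.span {x} = c := by
    apply hkey
    · exact fun h => hcT (top_le_iff.mp (h ▸ (Ideal.span_singleton_le_iff_mem c).mpr hxc))
    · exact fun h => hxm₂ (h (Ideal.mem_span_singleton_self x))
  -- span {x^2} = c
  have hx2m₂ : x * x ∉ m₂ := fun h => by
    rcases (hm₂.isPrime.mem_or_mem h) with h' | h' <;> exact hxm₂ h'
  have hspanx2 : Ideal.span {x * x} = c := by
    apply hkey
    · intro h
      exact hcT (top_le_iff.mp (h ▸ (Ideal.span_singleton_le_iff_mem c).mpr
        (Ideal.mul_mem_left c x hxc)))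
    · exact fun h => hx2m₂ (h (Ideal.mem_span_singleton_self _))
  -- x = r * x^2 for some r
  have hx_mem : x ∈ Ideal.span {x * x} := hspanx2 ▸ hxc
  obtain ⟨r, hr⟩ := Ideal.mem_span_singleton'.mp hx_mem
  -- e := r * x is idempotent and generates c
  obtain ⟨e, he_def⟩ : ∃ e : R, e = r * x := ⟨r * x, rfl⟩
  have hee : e * e = e := by rw [he_def]; linear_combination r * hr
  have hspe : Ideal.span {e} = c := by
    apply le_antisymm
    · rw [Ideal.span_singleton_le_iff_mem]
      exact he_def ▸ Ideal.mul_mem_left c r hxc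
    · rw [← hspanx, Ideal.span_singleton_le_iff_mem, Ideal.mem_span_singleton]
      exact ⟨x, by linear_combination -hr - x * he_def⟩
  have hem₂ : e ∉ m₂ := by
    intro h
    apply hxm₂
    have : e * x ∈ m₂ := Ideal.mul_mem_right x m₂ h
    have hx' : e * x = x := by linear_combination x * he_def + hr
    rwa [hx'] at this
  -- 1 - e ∈ m₂
  have h1e_m₂ : (1 : R) - e ∈ m₂ := by
    have hproper : Ideal.span {1 - e} ≠ ⊤ := by
      intro h
      have hu : IsUnit (1 - e) := by
        rw [Ideal.span_singleton_eq_top] at h; exact h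
      have hz : (1 - e) * e = 0 := by linear_combination -hee
      have he0 : e = 0 := (IsUnit.mul_right_eq_zero hu).mp hz
      exact hem₂ (he0 ▸ m₂.zero_mem)
    obtain ⟨m, hm, hlem⟩ := Ideal.exists_le_maximal _ hproper
    have hmc : m ≠ c := by
      intro h
      have h1 : (1 : R) - e ∈ c := h ▸ hlem (Ideal.mem_span_singleton_self _)
      have h2 : e ∈ c := hspe ▸ Ideal.mem_span_singleton_self e
      have : (1 : R) ∈ c := by
        have := c.add_mem h1 h2; simpa using this
      exact hcT ((Ideal.eq_top_iff_one c).mpr this)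
    rw [huniq m hm hmc] at hlem
    exact hlem (Ideal.mem_span_singleton_self _)
  -- coprimality and trivial intersection of span e and span (1-e)
  have hcop : IsCoprime c (Ideal.span {1 - e}) := by
    rw [Ideal.isCoprime_iff_exists]
    exact ⟨e, hspe ▸ Ideal.mem_span_singleton_self e, 1 - e,
      Ideal.mem_span_singleton_self _, by ring⟩
  have hinter : c ⊓ Ideal.span {1 - e} = ⊥ := by
    apply le_antisymm _ bot_le
    intro y hy
    rw [Submodule.mem_inf] at hy
    obtain ⟨hy1, hy2⟩ := hy
    rw [← hspe] at hy1
    obtain ⟨a, ha⟩ := Ideal.mem_span_singleton.mp hy1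
    obtain ⟨b, hb⟩ := Ideal.mem_span_singleton.mp hy2
    have h1 : y * e = y := by rw [ha]; linear_combination a * hee
    have h2 : y * e = 0 := by rw [hb]; linear_combination (-b) * hee
    have : y = 0 := by rw [← h1, h2]
    simp [this]
  -- local ring structure on R ⧸ span (1-e)
  have hnt : Ideal.span {1 - e} ≠ ⊤ := fun h =>
    hm₂T (top_le_iff.mp (h ▸ (Ideal.span_singleton_le_iff_mem m₂).mpr h1e_m₂))
  haveI : Nontrivial (R ⧸ Ideal.span {1 - e}) := Ideal.Quotient.nontrivial_iff.mpr hnt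
  have hunit : ∀ z : R, Ideal.span {z} ⊔ Ideal.span {1 - e} = ⊤ →
      IsUnit (Ideal.Quotient.mk (Ideal.span {1 - e}) z) := by
    intro z hz
    have h1 : (1 : R) ∈ Ideal.span {z} ⊔ Ideal.span {1 - e} := hz ▸ Submodule.mem_top
    rw [Submodule.mem_sup] at h1
    obtain ⟨a, ha, b, hb, hab⟩ := h1
    rw [Ideal.mem_span_singleton'] at ha
    obtain ⟨u, hu⟩ := ha
    refine IsUnit.of_mul_eq_one (Ideal.Quotient.mk _ u) ?_
    rw [← map_mul, ← map_one (Ideal.Quotient.mk (Ideal.span {1 - e}))]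
    rw [Ideal.Quotient.mk_eq_mk_iff_sub_mem]
    have : z * u - 1 = -b := by rw [← hab, mul_comm z u, hu]; ring
    rw [this]
    exact (Ideal.span {1 - e}).neg_mem hb
  haveI hloc : IsLocalRing (R ⧸ Ideal.span {1 - e}) := by
    apply IsLocalRing.of_isUnit_or_isUnit_one_sub_self
    intro a
    obtain ⟨z, rfl⟩ := Ideal.Quotient.mk_surjective a
    by_cases hz : Ideal.span {z} ⊔ Ideal.span {1 - e} = ⊤
    · exact Or.inl (hunit z hz)
    · refine Or.inr ?_
      rw [← map_one (Ideal.Quotient.mk (Ideal.span {1 - e})), ← map_sub]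
      apply hunit
      by_contra hz'
      -- both proper; each contained in a maximal ideal, which must be m₂
      obtain ⟨m, hm, hlem⟩ := Ideal.exists_le_maximal _ hz
      obtain ⟨m', hm', hlem'⟩ := Ideal.exists_le_maximal _ hz'
      have hsub : ∀ (n : Ideal R), n.IsMaximal → Ideal.span {1 - e} ≤ n → n = m₂ := by
        intro n hn hle
        apply huniq n hn
        intro h
        have h1 : (1 : R) - e ∈ c := h ▸ hle (Ideal.mem_span_singleton_self _)
        have h2 : e ∈ c := hspe ▸ Ideal.mem_span_singleton_self e
        have : (1 : R) ∈ c := by have := c.add_mem h1 h2; simpa using this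
        exact hcT ((Ideal.eq_top_iff_one c).mpr this)
      have hmm : m = m₂ := hsub m hm (le_sup_right.trans hlem)
      have hmm' : m' = m₂ := hsub m' hm' (le_sup_right.trans hlem')
      have hz_m : z ∈ m₂ := hmm ▸ hlem (Ideal.mem_sup_left (Ideal.mem_span_singleton_self _))
      have hz_m' : (1 : R) - z ∈ m₂ :=
        hmm' ▸ hlem' (Ideal.mem_sup_left (Ideal.mem_span_singleton_self _))
      have : (1 : R) ∈ m₂ := by have := m₂.add_mem hz_m hz_m'; simpa using this
      exact hm₂T ((Ideal.eq_top_iff_one m₂).mpr this)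
  -- assemble
  haveI := hcmax
  refine ⟨R ⧸ c, Ideal.Quotient.field c, R ⧸ Ideal.span {1 - e}, inferInstance, hloc, ⟨?_⟩⟩
  exact ((RingEquiv.quotientBot R).symm.trans
    ((Ideal.quotEquivOfEq hinter.symm).trans
      (Ideal.quotientInfEquivQuotientProd c (Ideal.span {1 - e}) hcop)))
end

section
/- Let R be a commutative ring with unity and let I be a proper ideal of R not contained in J(R) such that I + J = R for every proper ideal J of R with J not contained in J(R) and J ≠ I. Then I is a maximal ideal of R, and for every element a ∈ I with a ∉ J(R), one has I = Ra (the principal ideal generated by a). -/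
/-- If `I` is a vertex of `Γ(R)` adjacent to all other vertices, then `I` is a maximal
ideal of `R`, and `I = Ra` for every `a ∈ I` with `a ∉ J(R)`. -/
theorem comaximal_graph_vertex_adjacent_all_isMaximal_and_principal
    (R : Type) [CommRing R] (I : Ideal R)
    (hI : I ≠ ⊤) (hIJ : ¬ I ≤ Ideal.jacobson (⊥ : Ideal R))
    (hadj : ∀ J : Ideal R, J ≠ ⊤ → ¬ J ≤ Ideal.jacobson (⊥ : Ideal R) → J ≠ I →
      I ⊔ J = ⊤) :
    I.IsMaximal ∧ ∀ a ∈ I, a ∉ Ideal.jacobson (⊥ : Ideal R) → I = Ideal.span {a} := by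
  constructor
  · refine ⟨⟨hI, fun M hM => ?_⟩⟩
    by_contra hMtop
    have hMJ : ¬ M ≤ Ideal.jacobson ⊥ := fun h => hIJ (le_trans hM.le h)
    have h := hadj M hMtop hMJ hM.ne'
    rw [sup_eq_right.mpr hM.le] at h
    exact hMtop h
  · intro a ha haJ
    by_contra hne
    have h1 : Ideal.span {a} ≤ I := Ideal.span_le.mpr (by simpa using ha)
    have htop : Ideal.span {a} ≠ ⊤ := fun h => hI (top_le_iff.mp (h ▸ h1))
    have hJ : ¬ Ideal.span {a} ≤ Ideal.jacobson ⊥ :=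
      fun h => haJ (h (Ideal.subset_span rfl))
    have h := hadj _ htop hJ (fun h => hne h.symm)
    rw [sup_eq_left.mpr h1] at h
    exact hI h
end

section
/- Let R be a commutative ring with unity and suppose there exists a proper ideal I of R not contained in J(R) such that I + J = R for every proper ideal J of R with J not contained in J(R) and J ≠ I. Then R contains a nontrivial idempotent, i.e., an element e with e² = e, e ≠ 0, and e ≠ 1. -/
/-- If the co-maximal ideal graph `Γ(R)` has a vertex adjacent to all other vertices,
then `R` contains a nontrivial idempotent. -/
theorem comaximal_graph_vertex_adjacent_all_exists_idempotent
    (R : Type) [CommRing R]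
    (h : ∃ I : Ideal R, I ≠ ⊤ ∧ ¬ I ≤ Ideal.jacobson (⊥ : Ideal R) ∧
      ∀ J : Ideal R, J ≠ ⊤ → ¬ J ≤ Ideal.jacobson (⊥ : Ideal R) → J ≠ I → I ⊔ J = ⊤) :
    ∃ e : R, e ^ 2 = e ∧ e ≠ 0 ∧ e ≠ 1 := by
  obtain ⟨I, hItop, hIjac, hI⟩ := h
  obtain ⟨x, hxI, hxjac⟩ := SetLike.not_le_iff_exists.mp hIjac
  -- x * x is not in the Jacobson radical
  have hx2jac : x * x ∉ Ideal.jacobson (⊥ : Ideal R) := by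
    intro hmem
    apply hxjac
    rw [Ideal.jacobson, Ideal.mem_sInf] at hmem ⊢
    intro J hJ
    have hp : J.IsPrime := hJ.2.isPrime
    rcases hp.mem_or_mem (hmem hJ) with h' | h' <;> exact h'
  set S : Ideal R := Ideal.span {x * x} with hS
  have hle : S ≤ I := (Ideal.span_singleton_le_iff_mem I).mpr (I.mul_mem_left x hxI)
  have hSne : S ≠ ⊤ := fun hT => hItop (top_le_iff.mp (hT ▸ hle))
  have hSjac : ¬ S ≤ Ideal.jacobson (⊥ : Ideal R) := fun h' =>
    hx2jac (h' (Ideal.mem_span_singleton_self _))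
  have hSI : S = I := by
    by_contra hne
    have := hI S hSne hSjac hne
    rw [sup_of_le_left hle] at this
    exact hItop this
  have hxS : x ∈ S := hSI ▸ hxI
  obtain ⟨r, hr⟩ := Ideal.mem_span_singleton'.mp hxS
  refine ⟨r * x, ?_, ?_, ?_⟩
  · have : (r * x) ^ 2 = r * (r * (x * x)) := by ring
    rw [this, hr]
  · intro h0
    apply hxjac
    have : x = 0 := by
      have : x = (r * x) * x := by rw [mul_assoc]; exact hr.symm
      rw [this, h0, zero_mul]
    rw [this]
    exact (Ideal.jacobson ⊥).zero_mem
  · intro h1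
    apply hItop
    rw [Ideal.eq_top_iff_one, ← h1]
    exact I.mul_mem_left r hxI
end

section
/- Let R be a commutative ring with unity. Suppose there exists a natural number n such that every independent set of Γ(R) has at most n elements, i.e., every family of proper ideals of R, each not contained in J(R), that are pairwise non-comaximal (I₁ + I₂ ≠ R for all distinct members I₁, I₂) has cardinality at most n. Then Γ(R) is a finite graph, i.e., the set of proper ideals of R not contained in J(R) is finite. -/
/-- If the independence number of the co-maximal ideal graph `Γ(R)` is finite (every
family of vertices that are pairwise non-comaximal has at most `n` elements for some
fixed `n`), then `Γ(R)` is a finite graph: the set of proper ideals of `R` not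
contained in `J(R)` is finite. -/
theorem comaximal_graph_finite_of_independence_number_finite
    (R : Type) [CommRing R]
    (h : ∃ n : ℕ, ∀ s : Finset (Ideal R),
      (∀ I ∈ s, I ≠ ⊤ ∧ ¬ I ≤ Ideal.jacobson (⊥ : Ideal R)) →
      (∀ I ∈ s, ∀ J ∈ s, I ≠ J → I ⊔ J ≠ ⊤) → s.card ≤ n) :
    {I : Ideal R | I ≠ ⊤ ∧ ¬ I ≤ Ideal.jacobson (⊥ : Ideal R)}.Finite := by
  classical
  obtain ⟨n, h⟩ := h
  -- Any set of pairwise non-comaximal vertices is finite.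
  have key : ∀ S : Set (Ideal R),
      (∀ I ∈ S, I ≠ ⊤ ∧ ¬ I ≤ Ideal.jacobson (⊥ : Ideal R)) →
      (∀ I ∈ S, ∀ J ∈ S, I ≠ J → I ⊔ J ≠ ⊤) → S.Finite := by
    intro S h1 h2
    by_contra hinf
    rw [← Set.not_infinite, not_not] at hinf
    obtain ⟨t, hts, htc⟩ := hinf.exists_subset_card_eq (n + 1)
    have := h t (fun I hI => h1 I (hts hI))
      (fun I hI J hJ hIJ => h2 I (hts hI) J (hts hJ) hIJ)
    omega
  -- Jacobson radical is below every maximal ideal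
  have hJle : ∀ M : Ideal R, M.IsMaximal → Ideal.jacobson (⊥ : Ideal R) ≤ M := by
    intro M hM
    exact sInf_le ⟨bot_le, hM⟩
  -- The set of maximal ideals is finite.
  have hmax : {M : Ideal R | M.IsMaximal}.Finite := by
    by_contra hinf
    rw [← Set.not_infinite, not_not] at hinf
    obtain ⟨t, hts, htc⟩ := hinf.exists_subset_card_eq (n + 3)
    have htm : ∀ M ∈ t, Ideal.IsMaximal M := fun M hM => hts hM
    set f : Ideal R → Ideal R := fun M => (t.erase M).inf id with hf
    -- f M is not contained in M
    have hnotle : ∀ M ∈ t, ¬ f M ≤ M := by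
      intro M hM hle
      obtain ⟨M', hM', hle'⟩ := ((htm M hM).isPrime.inf_le').mp hle
      have : M' = M := (htm M' (Finset.mem_of_mem_erase hM')).eq_of_le
        (htm M hM).ne_top hle'
      exact (Finset.ne_of_mem_erase hM') this
    -- f M is a vertex
    have hvert : ∀ M ∈ t, f M ≠ ⊤ ∧ ¬ f M ≤ Ideal.jacobson (⊥ : Ideal R) := by
      intro M hM
      have hcard : 1 ≤ (t.erase M).card := by
        rw [Finset.card_erase_of_mem hM]; omega
      obtain ⟨M', hM'⟩ := Finset.card_pos.mp (show 0 < (t.erase M).card by omega)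
      have hle : f M ≤ M' := Finset.inf_le hM'
      constructor
      · intro htop
        exact (htm M' (Finset.mem_of_mem_erase hM')).ne_top (top_le_iff.mp (htop ▸ hle))
      · intro hle'
        exact hnotle M hM (hle'.trans (hJle M (htm M hM)))
    -- f is injective on t
    have hinj : ∀ M ∈ t, ∀ M' ∈ t, f M = f M' → M = M' := by
      intro M hM M' hM' heq
      by_contra hne
      have h1 : f M ≤ M' := Finset.inf_le (Finset.mem_erase.mpr ⟨fun e => hne e.symm, hM'⟩)
      exact hnotle M' hM' (heq ▸ h1)
    have hcard : (t.image f).card = n + 3 := by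
      rw [Finset.card_image_of_injOn (fun M hM M' hM' => hinj M hM M' hM'), htc]
    have := h (t.image f)
      (by
        intro I hI
        obtain ⟨M, hM, rfl⟩ := Finset.mem_image.mp hI
        exact hvert M hM)
      (by
        intro I hI J hJ hIJ
        obtain ⟨M, hM, rfl⟩ := Finset.mem_image.mp hI
        obtain ⟨M', hM', rfl⟩ := Finset.mem_image.mp hJ
        have hMM' : M ≠ M' := fun e => hIJ (by rw [e])
        -- pick a third maximal ideal
        have : 1 ≤ ((t.erase M).erase M').card := by
          rw [Finset.card_erase_of_mem (Finset.mem_erase.mpr ⟨fun e => hMM' e.symm, hM'⟩),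
            Finset.card_erase_of_mem hM, htc]
          omega
        obtain ⟨M'', hM''⟩ := Finset.card_pos.mp
          (show 0 < ((t.erase M).erase M').card by omega)
        have h1 : f M ≤ M'' := Finset.inf_le (Finset.mem_of_mem_erase hM'')
        have h2 : f M' ≤ M'' := by
          apply Finset.inf_le
          rw [Finset.mem_erase]
          exact ⟨(Finset.mem_erase.mp hM'').1,
            Finset.mem_of_mem_erase (Finset.mem_of_mem_erase hM'')⟩
        intro htop
        exact (htm M'' (Finset.mem_of_mem_erase (Finset.mem_of_mem_erase hM''))).ne_top
          (top_le_iff.mp (htop ▸ sup_le h1 h2)))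
    omega
  -- Every vertex is below some maximal ideal; vertices below a fixed maximal
  -- ideal form an independent set.
  have hsub : {I : Ideal R | I ≠ ⊤ ∧ ¬ I ≤ Ideal.jacobson (⊥ : Ideal R)} ⊆
      ⋃ M ∈ {M : Ideal R | M.IsMaximal},
        {I : Ideal R | I ≤ M ∧ I ≠ ⊤ ∧ ¬ I ≤ Ideal.jacobson (⊥ : Ideal R)} := by
    intro I hI
    obtain ⟨M, hM, hle⟩ := Ideal.exists_le_maximal I hI.1
    exact Set.mem_biUnion hM ⟨hle, hI⟩
  refine Set.Finite.subset (Set.Finite.biUnion hmax fun M hM => ?_) hsub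
  apply key
  · exact fun I hI => hI.2
  · intro I hI J hJ hIJ htop
    exact hM.ne_top (top_le_iff.mp (htop ▸ sup_le hI.1 hJ.1))
end

section
/- Let R be a commutative ring with unity. If there exists a natural number n such that every set of pairwise non-adjacent vertices of Γ(R) (i.e., every family of proper ideals of R, each not contained in J(R), with I₁ + I₂ ≠ R for all distinct members I₁, I₂) has at most n elements, then R has only finitely many maximal ideals. -/
/-- If every set of pairwise non-adjacent vertices of the co-maximal ideal graph `Γ(R)`
has at most `n` elements for some fixed `n`, then `R` has only finitely many maximal
ideals. -/
theorem finitely_many_maximal_ideals_of_independence_number_finite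
    (R : Type) [CommRing R]
    (h : ∃ n : ℕ, ∀ s : Finset (Ideal R),
      (∀ I ∈ s, I ≠ ⊤ ∧ ¬ I ≤ Ideal.jacobson (⊥ : Ideal R)) →
      (∀ I ∈ s, ∀ J ∈ s, I ≠ J → I ⊔ J ≠ ⊤) → s.card ≤ n) :
    {I : Ideal R | I.IsMaximal}.Finite := by
  obtain ⟨n, hn⟩ := h
  by_contra hinf
  rw [← Set.not_infinite, not_not] at hinf
  obtain ⟨M, hM⟩ := hinf.nonempty
  have hM' : M.IsMaximal := hM
  have hinf' : ({I : Ideal R | I.IsMaximal} \ {M}).Infinite :=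
    hinf.diff (Set.finite_singleton M)
  obtain ⟨t, hts, htc⟩ := hinf'.exists_subset_card_eq (n + 1)
  -- key facts about elements of t
  have ht : ∀ N ∈ t, N.IsMaximal ∧ N ≠ M := by
    intro N hN
    have := hts hN
    exact ⟨this.1, by simpa using this.2⟩
  -- injectivity of N ↦ M ⊓ N on t
  have hinj : Set.InjOn (fun N => M ⊓ N) t := by
    intro N hN N' hN' heq
    obtain ⟨hNm, hNne⟩ := ht N hN
    obtain ⟨hN'm, hN'ne⟩ := ht N' hN'
    simp only at heq
    have hle : M ⊓ N ≤ N' := heq.le.trans inf_le_right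
    rcases hN'm.isPrime.inf_le.mp hle with h1 | h2
    · exact absurd (hM'.eq_of_le hN'm.ne_top h1) (Ne.symm hN'ne)
    · exact hNm.eq_of_le hN'm.ne_top h2
  classical
  set s : Finset (Ideal R) := t.image (fun N => M ⊓ N) with hs
  have hcard : s.card = n + 1 := by
    rw [hs, Finset.card_image_of_injOn hinj, htc]
  have hmem : ∀ I ∈ s, ∃ N ∈ t, I = M ⊓ N := by
    intro I hI
    simp only [hs, Finset.mem_image] at hI
    obtain ⟨N, hN, hIN⟩ := hI
    exact ⟨N, hN, hIN.symm⟩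
  have hbound := hn s ?_ ?_
  · omega
  · -- vertex condition
    intro I hI
    obtain ⟨N, hN, rfl⟩ := hmem I hI
    obtain ⟨hNm, hNne⟩ := ht N hN
    constructor
    · intro htop
      exact hM'.ne_top (top_le_iff.mp (htop ▸ inf_le_left))
    · intro hle
      -- pick a third maximal ideal P distinct from M and N
      have : ({I : Ideal R | I.IsMaximal} \ {M, N}).Infinite :=
        hinf.diff (Set.toFinite {M, N})
      obtain ⟨P, hP⟩ := this.nonempty
      have hPm : P.IsMaximal := hP.1
      have hPne : P ≠ M ∧ P ≠ N := by
        constructor <;> intro hh <;> exact hP.2 (by simp [hh])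
      have hjle : Ideal.jacobson (⊥ : Ideal R) ≤ P := by
        apply sInf_le
        exact ⟨bot_le, hPm⟩
      have hle' : M ⊓ N ≤ P := hle.trans hjle
      rcases hPm.isPrime.inf_le.mp hle' with h1 | h2
      · exact hPne.1 (hM'.eq_of_le hPm.ne_top h1).symm
      · exact hPne.2 ((ht N hN).1.eq_of_le hPm.ne_top h2).symm
  · -- independence condition
    intro I hI J hJ _ htop
    obtain ⟨N, hN, rfl⟩ := hmem I hI
    obtain ⟨N', hN', rfl⟩ := hmem J hJ
    have : (M ⊓ N) ⊔ (M ⊓ N') ≤ M := sup_le inf_le_left inf_le_left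
    exact hM'.ne_top (top_le_iff.mp (htop ▸ this))
end

section
/- Let R be a commutative ring with unity such that Γ(R) has at least one vertex (i.e., there exists a proper ideal of R not contained in J(R)). If every vertex of Γ(R) has finite degree — that is, for every proper ideal I of R not contained in J(R), the set of proper ideals J of R with J not contained in J(R) and I + J = R is finite — then R has only finitely many ideals. -/
/-- If the co-maximal ideal graph `Γ(R)` has at least one vertex and every vertex has
finite degree, then `R` has only finitely many ideals. -/
theorem finitely_many_ideals_of_all_degrees_finite
    (R : Type) [CommRing R]
    (hne : ∃ I : Ideal R, I ≠ ⊤ ∧ ¬ I ≤ Ideal.jacobson (⊥ : Ideal R))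
    (hdeg : ∀ I : Ideal R, I ≠ ⊤ → ¬ I ≤ Ideal.jacobson (⊥ : Ideal R) →
      {J : Ideal R | J ≠ ⊤ ∧ ¬ J ≤ Ideal.jacobson (⊥ : Ideal R) ∧ I ⊔ J = ⊤}.Finite) :
    Finite (Ideal R) := by
  classical
  obtain ⟨I₀, hI₀top, hI₀J⟩ := hne
  -- the Jacobson radical is below every maximal ideal
  have hJle : ∀ M : Ideal R, M.IsMaximal → Ideal.jacobson (⊥ : Ideal R) ≤ M := by
    intro M hM
    exact sInf_le ⟨bot_le, hM⟩
  -- existence of a maximal ideal not containing a given ideal not ≤ Jac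
  have hexM : ∀ I : Ideal R, ¬ I ≤ Ideal.jacobson (⊥ : Ideal R) →
      ∃ M : Ideal R, M.IsMaximal ∧ ¬ I ≤ M := by
    intro I hI
    by_contra h
    push_neg at h
    exact hI (le_sInf fun M hM => h M hM.2)
  obtain ⟨M₂, hM₂, hI₀M₂⟩ := hexM I₀ hI₀J
  obtain ⟨M₁, hM₁, hI₀M₁⟩ := Ideal.exists_le_maximal I₀ hI₀top
  have hM₁₂ : M₁ ≠ M₂ := fun h => hI₀M₂ (h ▸ hI₀M₁)
  -- no maximal ideal is below the Jacobson radical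
  have hMnotJ : ∀ M : Ideal R, M.IsMaximal → ¬ M ≤ Ideal.jacobson (⊥ : Ideal R) := by
    intro M hM hle
    have h1 : M = M₁ := hM.eq_of_le hM₁.ne_top (hle.trans (hJle _ hM₁))
    have h2 : M = M₂ := hM.eq_of_le hM₂.ne_top (hle.trans (hJle _ hM₂))
    exact hM₁₂ (h1 ▸ h2)
  -- a maximal ideal together with an ideal not below it are comaximal
  have hsup : ∀ (M K : Ideal R), M.IsMaximal → ¬ K ≤ M → M ⊔ K = ⊤ := by
    intro M K hM hKM
    have hlt : M < M ⊔ K :=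
      lt_of_le_of_ne le_sup_left (fun h => hKM (le_sup_right.trans h.ge))
    exact (Ideal.isMaximal_def.mp hM).2 _ hlt
  -- for every maximal ideal, there is another one
  have hother : ∀ M : Ideal R, ∃ M' : Ideal R, M'.IsMaximal ∧ M' ≠ M := by
    intro M
    rcases eq_or_ne M M₁ with h | h
    · exact ⟨M₂, hM₂, fun hh => hM₁₂ (hh.trans h).symm⟩
    · exact ⟨M₁, hM₁, fun hh => h (hh ▸ rfl)⟩
  -- the set of maximal ideals is finite
  have hMaxFin : {M : Ideal R | M.IsMaximal}.Finite := by
    apply Set.Finite.subset (Set.Finite.insert M₁ (hdeg M₁ hM₁.ne_top (hMnotJ M₁ hM₁)))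
    intro M hM
    have hM : M.IsMaximal := hM
    rcases eq_or_ne M M₁ with h | h
    · exact Set.mem_insert_iff.mpr (Or.inl h)
    · refine Set.mem_insert_iff.mpr (Or.inr ⟨hM.ne_top, hMnotJ M hM, hsup M₁ M hM₁ ?_⟩)
      exact fun hle => h (hM.eq_of_le hM₁.ne_top hle)
  -- the set of vertices is finite
  have hVFin : {K : Ideal R | K ≠ ⊤ ∧ ¬ K ≤ Ideal.jacobson (⊥ : Ideal R)}.Finite := by
    apply Set.Finite.subset (Set.Finite.biUnion hMaxFin
      (fun M hM => hdeg M (hM : M.IsMaximal).ne_top (hMnotJ M hM)))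
    rintro K ⟨hKtop, hKJ⟩
    obtain ⟨M, hM, hKM⟩ := hexM K hKJ
    exact Set.mem_biUnion (show M ∈ {M : Ideal R | M.IsMaximal} from hM)
      ⟨hKtop, hKJ, hsup M K hM hKM⟩
  -- for each maximal ideal M, an idempotent a with 1 - a ∈ M and a in all other maximals
  have hidem : ∀ M : Ideal R, M.IsMaximal → ∃ a : R, a * a = a ∧ (1 - a) ∈ M ∧
      ∀ M' : Ideal R, M'.IsMaximal → M' ≠ M → a ∈ M' := by
    intro M hM
    set T : Finset (Ideal R) := hMaxFin.toFinset.erase M with hT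
    have hmemT : ∀ M' : Ideal R, M'.IsMaximal → M' ≠ M → M' ∈ T := by
      intro M' hM' hne'
      exact Finset.mem_erase.mpr ⟨hne', hMaxFin.mem_toFinset.mpr hM'⟩
    obtain ⟨M'', hM'', hM''ne⟩ := hother M
    -- the intersection of the other maximal ideals is not inside M
    have henotle : ¬ T.inf id ≤ M := by
      intro hle
      obtain ⟨M', hM'T, hM'le⟩ := (Ideal.IsPrime.inf_le' hM.isPrime).mp hle
      obtain ⟨hM'ne, hM'mem⟩ := Finset.mem_erase.mp hM'T
      exact hM'ne ((hMaxFin.mem_toFinset.mp hM'mem).eq_of_le hM.ne_top hM'le)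
    obtain ⟨x, hxe, hxM⟩ := SetLike.not_le_iff_exists.mp henotle
    have hxpow : ∀ k : ℕ, 0 < k → x ^ k ∈ T.inf id :=
      fun k hk => Ideal.pow_mem_of_mem _ hxe _ hk
    have hxpowM : ∀ k : ℕ, x ^ k ∉ M :=
      fun k h => hxM (hM.isPrime.mem_of_pow_mem _ h)
    have hTleM'' : T.inf id ≤ M'' := Finset.inf_le (hmemT M'' hM'' hM''ne)
    -- the principal ideals (x^(k+1)) are all neighbours of M, so two coincide
    have hS := hdeg M hM.ne_top (hMnotJ M hM)
    have hnotinj : ¬ Function.Injective (fun k : ℕ => Ideal.span {x ^ (k + 1)}) := by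
      intro hinj
      refine (Set.infinite_of_injective_forall_mem hinj ?_) hS
      intro k
      refine ⟨?_, ?_, ?_⟩
      · refine ne_top_of_le_ne_top hM''.ne_top ?_
        rw [Ideal.span_le, Set.singleton_subset_iff]
        exact hTleM'' (hxpow _ (Nat.succ_pos k))
      · intro hle
        exact hxpowM (k + 1) (hJle M hM (hle (Ideal.mem_span_singleton_self _)))
      · refine hsup M _ hM ?_
        intro hle
        exact hxpowM (k + 1) (hle (Ideal.mem_span_singleton_self _))
    -- extract an idempotent from a stabilized chain of powers
    have key : ∀ k l : ℕ, k < l → Ideal.span {x ^ (k + 1)} = Ideal.span {x ^ (l + 1)} →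
        ∃ a : R, a * a = a ∧ (1 - a) ∈ M ∧
        ∀ M' : Ideal R, M'.IsMaximal → M' ≠ M → a ∈ M' := by
      intro k l hlt hspan
      obtain ⟨c, hc⟩ := Ideal.mem_span_singleton'.mp
        (hspan ▸ Ideal.mem_span_singleton_self (x ^ (k + 1)))
      set K := k + 1 with hKdef
      set d := l - k with hddef
      have hdpos : 1 ≤ d := by omega
      have hld : l + 1 = K + d := by omega
      have hstep : x ^ K = c * x ^ (K + d) := by rw [← hld]; exact hc.symm
      have hiter : ∀ m : ℕ, x ^ K = c ^ m * x ^ (K + m * d) := by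
        intro m
        induction m with
        | zero => simp
        | succ m ih =>
          have h1 : K + (m + 1) * d = m * d + (K + d) := by ring
          calc x ^ K = c ^ m * x ^ (K + m * d) := ih
            _ = c ^ m * (x ^ K * x ^ (m * d)) := by rw [← pow_add]
            _ = c ^ m * (c * x ^ (K + d) * x ^ (m * d)) := by rw [← hstep]
            _ = c ^ (m + 1) * x ^ (m * d + (K + d)) := by rw [pow_succ, pow_add]; ring
            _ = c ^ (m + 1) * x ^ (K + (m + 1) * d) := by rw [← h1]
      set a := c ^ K * x ^ (K * d) with hadef
      have haK : a * x ^ K = x ^ K := by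
        rw [hadef, mul_assoc, ← pow_add]
        rw [show K * d + K = K + K * d by ring]
        exact (hiter K).symm
      have hxKd : x ^ (K * d) = x ^ (K * d - K) * x ^ K := by
        rw [← pow_add]
        congr 1
        have : K ≤ K * d := Nat.le_mul_of_pos_right K (by omega)
        omega
      have ht : a = c ^ K * x ^ (K * d - K) * x ^ K := by
        rw [hadef, hxKd]; ring
      refine ⟨a, ?_, ?_, ?_⟩
      · calc a * a = c ^ K * x ^ (K * d - K) * (a * x ^ K) := by rw [ht]; ring
          _ = c ^ K * x ^ (K * d - K) * x ^ K := by rw [haK]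
          _ = a := ht.symm
      · have hz : x ^ K * (1 - a) = 0 := by
          rw [mul_sub, mul_one, mul_comm, haK, sub_self]
        have hzM : x ^ K * (1 - a) ∈ M := by rw [hz]; exact M.zero_mem
        rcases hM.isPrime.mem_or_mem hzM with h | h
        · exact absurd h (hxpowM K)
        · exact h
      · intro M' hM' hne'
        have hxmem : x ^ (K * d) ∈ M' :=
          (Finset.inf_le (hmemT M' hM' hne') : T.inf id ≤ M')
            (hxpow _ (by positivity))
        rw [hadef]
        exact Ideal.mul_mem_left _ _ hxmem
    obtain ⟨k, l, hkl, hklne⟩ := Function.not_injective_iff.mp hnotinj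
    rcases lt_or_gt_of_ne hklne with h | h
    · exact key k l h hkl
    · exact key l k h hkl.symm
  choose g hg1 hg2 hg3 using hidem
  set g' : Ideal R → R := fun M => if h : M.IsMaximal then g M h else 0 with hg'def
  have hg'1 : ∀ M : Ideal R, M.IsMaximal → g' M * g' M = g' M := by
    intro M hM; simp only [hg'def, dif_pos hM]; exact hg1 M hM
  have hg'2 : ∀ M : Ideal R, (hM : M.IsMaximal) → (1 - g' M) ∈ M := by
    intro M hM; simp only [hg'def, dif_pos hM]; exact hg2 M hM
  have hg'3 : ∀ M : Ideal R, (hM : M.IsMaximal) → ∀ M' : Ideal R, M'.IsMaximal → M' ≠ M →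
      g' M ∈ M' := by
    intro M hM M' hM' hne'; simp only [hg'def, dif_pos hM]; exact hg3 M hM M' hM' hne'
  -- an idempotent in the Jacobson radical is zero
  have hJidem : ∀ z : R, z ∈ Ideal.jacobson (⊥ : Ideal R) → z * z = z → z = 0 := by
    intro z hz hzz
    have hu : IsUnit (z * (-1) + 1) := Ideal.mem_jacobson_bot.mp hz (-1)
    have hu' : IsUnit (1 - z) := by
      have : z * (-1) + 1 = 1 - z := by ring
      rwa [this] at hu
    obtain ⟨u, hu⟩ := hu'
    have hz0 : z * (1 - z) = 0 := by rw [mul_sub, mul_one, hzz, sub_self]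
    calc z = z * ((1 - z) * ↑u⁻¹) := by
          rw [← hu, Units.mul_inv, mul_one]
      _ = z * (1 - z) * ↑u⁻¹ := by ring
      _ = 0 := by rw [hz0, zero_mul]
  -- orthogonality of the idempotents
  have horth : ∀ M M' : Ideal R, M.IsMaximal → M'.IsMaximal → M ≠ M' →
      g' M * g' M' = 0 := by
    intro M M' hM hM' hne'
    apply hJidem
    · apply Ideal.mem_sInf.mpr
      rintro I ⟨-, hImax⟩
      rcases eq_or_ne I M with h | h
      · exact Ideal.mul_mem_left _ _ (hg'3 M' hM' I hImax (by rw [h]; exact hne'))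
      · exact Ideal.mul_mem_right _ _ (hg'3 M hM I hImax h)
    · calc g' M * g' M' * (g' M * g' M') = (g' M * g' M) * (g' M' * g' M') := by ring
        _ = g' M * g' M' := by rw [hg'1 M hM, hg'1 M' hM']
  set MF : Finset (Ideal R) := hMaxFin.toFinset with hMFdef
  have hMFmax : ∀ M ∈ MF, M.IsMaximal := fun M hM => hMaxFin.mem_toFinset.mp hM
  set s : R := ∑ M ∈ MF, g' M with hsdef
  -- the idempotents sum to 1
  have hss : s * s = s := by
    rw [hsdef, Finset.sum_mul_sum]
    apply Finset.sum_congr rfl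
    intro M hM
    rw [Finset.sum_eq_single M]
    · exact hg'1 M (hMFmax M hM)
    · intro M' hM' hne'
      exact horth M M' (hMFmax M hM) (hMFmax M' hM') (Ne.symm hne')
    · intro h; exact absurd hM h
  have hs1 : s = 1 := by
    have h1s : (1 - s) * (1 - s) = 1 - s := by
      have : (1 - s) * (1 - s) = 1 - s - (s - s * s) := by ring
      rw [this, hss, sub_self, sub_zero]
    have h1sJ : (1 - s) ∈ Ideal.jacobson (⊥ : Ideal R) := by
      apply Ideal.mem_sInf.mpr
      rintro I ⟨-, hImax⟩
      have hIMF : I ∈ MF := hMaxFin.mem_toFinset.mpr hImax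
      have hsplit : s = ∑ M ∈ MF.erase I, g' M + g' I := by
        rw [hsdef, Finset.sum_erase_add MF _ hIMF]
      have hsumI : ∑ M ∈ MF.erase I, g' M ∈ I := by
        apply Ideal.sum_mem
        intro M hM
        obtain ⟨hne', hMmem⟩ := Finset.mem_erase.mp hM
        exact hg'3 M (hMFmax M hMmem) I hImax (Ne.symm hne')
      have : 1 - s = (1 - g' I) - ∑ M ∈ MF.erase I, g' M := by rw [hsplit]; ring
      rw [this]
      exact Submodule.sub_mem _ (hg'2 I hImax) hsumI
    have h0 := hJidem _ h1sJ h1s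
    exact (sub_eq_zero.mp h0).symm
  -- the injection into a finite product
  haveI : Finite ↥{M : Ideal R | M.IsMaximal} := hMaxFin.to_subtype
  haveI : Finite ↥(insert ⊤ {K : Ideal R | K ≠ ⊤ ∧ ¬ K ≤ Ideal.jacobson (⊥ : Ideal R)}) :=
    (hVFin.insert ⊤).to_subtype
  set f : Ideal R → (↥{M : Ideal R | M.IsMaximal} →
      ↥(insert ⊤ {K : Ideal R | K ≠ ⊤ ∧ ¬ K ≤ Ideal.jacobson (⊥ : Ideal R)})) :=
    fun I M => ⟨I ⊔ Ideal.span {1 - g' M.1}, by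
      have hMmax : (M.1 : Ideal R).IsMaximal := M.2
      by_cases hKtop : I ⊔ Ideal.span {1 - g' M.1} = ⊤
      · exact Set.mem_insert_iff.mpr (Or.inl hKtop)
      · refine Set.mem_insert_iff.mpr (Or.inr ⟨hKtop, ?_⟩)
        intro hle
        obtain ⟨M', hM', hM'ne⟩ := hother M.1
        have h1 : (1 - g' M.1) ∈ M' :=
          (hJle M' hM') (hle (Submodule.mem_sup_right (Ideal.mem_span_singleton_self _)))
        have h2 : g' M.1 ∈ M' := hg'3 M.1 hMmax M' hM' hM'ne
        have : (1 : R) ∈ M' := by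
          have := Submodule.add_mem _ h1 h2
          rwa [sub_add_cancel] at this
        exact hM'.ne_top (Ideal.eq_top_iff_one _ |>.mpr this)⟩
    with hfdef
  have hmain : ∀ A B : Ideal R,
      (∀ M : Ideal R, M.IsMaximal →
        A ⊔ Ideal.span {1 - g' M} = B ⊔ Ideal.span {1 - g' M}) → A ≤ B := by
    intro A B hAB y hy
    have hyg : ∀ M : Ideal R, M.IsMaximal → y * g' M ∈ B := by
      intro M hM
      have hmem : y ∈ B ⊔ Ideal.span {1 - g' M} := by
        rw [← hAB M hM]
        exact Submodule.mem_sup_left hy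
      obtain ⟨b, hb, z, hz, hbz⟩ := Submodule.mem_sup.mp hmem
      obtain ⟨t, ht⟩ := Ideal.mem_span_singleton'.mp hz
      have hgg : g' M * g' M = g' M := hg'1 M hM
      have : y * g' M = b * g' M + t * (g' M - g' M * g' M) := by
        rw [← hbz, ← ht]; ring
      rw [this, hgg, sub_self, mul_zero, add_zero]
      exact Ideal.mul_mem_right _ _ hb
    have hysum : y = ∑ M ∈ MF, y * g' M := by
      rw [← Finset.mul_sum, ← hsdef, hs1, mul_one]
    rw [hysum]
    exact Ideal.sum_mem _ (fun M hM => hyg M (hMFmax M hM))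
  have hinj : Function.Injective f := by
    intro A B hAB
    have heq : ∀ M : Ideal R, M.IsMaximal →
        A ⊔ Ideal.span {1 - g' M} = B ⊔ Ideal.span {1 - g' M} := by
      intro M hM
      have := congrFun hAB ⟨M, hM⟩
      exact Subtype.ext_iff.mp this
    exact le_antisymm (hmain A B heq) (hmain B A (fun M hM => (heq M hM).symm))
  exact Finite.of_injective f hinj
end

section
/- Let R be a commutative ring with unity. If there exists a proper ideal I of R not contained in J(R) such that the set of proper ideals J of R with J not contained in J(R) and I + J = R is finite (i.e., some vertex of Γ(R) has finite degree), then R contains a nontrivial idempotent: an element e with e² = e, e ≠ 0, and e ≠ 1. -/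
/-- Auxiliary: if `m^k ∣ m^j` with `0 < j < k`, `m` lies in a proper ideal `M`,
and `m^j ≠ 0`, then we get a nontrivial idempotent. -/
theorem aux_idem (R : Type) [CommRing R] (m : R) (j k : ℕ) (hj : 0 < j) (hjk : j < k)
    (hdvd : m ^ k ∣ m ^ j) (M : Ideal R) (hMtop : M ≠ ⊤) (hmM : m ∈ M)
    (h0 : m ^ j ≠ 0) :
    ∃ e : R, e ^ 2 = e ∧ e ≠ 0 ∧ e ≠ 1 := by
  obtain ⟨c, hc⟩ := hdvd
  set d := k - j with hd
  have hdpos : 0 < d := Nat.sub_pos_of_lt hjk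
  have hk : k = j + d := by omega
  set t := m ^ d * c with htdef
  have ht : m ^ j * t = m ^ j := by
    rw [htdef, ← mul_assoc, ← pow_add, ← hk, ← hc]
  have htn : ∀ n : ℕ, m ^ j * t ^ n = m ^ j := by
    intro n
    induction n with
    | zero => simp
    | succ n ih => rw [pow_succ, ← mul_assoc, ih, ht]
  refine ⟨t ^ j, ?_, ?_, ?_⟩
  · -- idempotent
    have hle : j ≤ d * j := Nat.le_mul_of_pos_left j hdpos
    have he : t ^ j = m ^ j * (m ^ (d * j - j) * c ^ j) := by
      rw [htdef, mul_pow, ← pow_mul, ← mul_assoc, ← pow_add]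
      congr 2
      omega
    calc (t ^ j) ^ 2 = (m ^ j * t ^ j) * (m ^ (d * j - j) * c ^ j) := by
          rw [pow_two, he]; ring
      _ = m ^ j * (m ^ (d * j - j) * c ^ j) := by rw [htn j]
      _ = t ^ j := he.symm
  · -- nonzero
    intro he0
    apply h0
    have := htn j
    rw [he0, mul_zero] at this
    exact this.symm
  · -- not one
    intro he1
    apply hMtop
    rw [Ideal.eq_top_iff_one]
    have : t ^ j ∈ M := by
      have htM : t ∈ M := by
        rw [htdef]
        exact M.mul_mem_right c (Ideal.pow_mem_of_mem M hmM d hdpos)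
      exact Ideal.pow_mem_of_mem M htM j hj
    rwa [he1] at this

/-- If some vertex of the co-maximal ideal graph `Γ(R)` has finite degree, then `R`
contains a nontrivial idempotent. -/
theorem exists_idempotent_of_vertex_finite_degree
    (R : Type) [CommRing R]
    (h : ∃ I : Ideal R, I ≠ ⊤ ∧ ¬ I ≤ Ideal.jacobson (⊥ : Ideal R) ∧
      {J : Ideal R | J ≠ ⊤ ∧ ¬ J ≤ Ideal.jacobson (⊥ : Ideal R) ∧ I ⊔ J = ⊤}.Finite) :
    ∃ e : R, e ^ 2 = e ∧ e ≠ 0 ∧ e ≠ 1 := by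
  obtain ⟨I, hItop, hIjac, hfin⟩ := h
  -- find a maximal ideal M with ¬ I ≤ M
  have hex : ∃ M : Ideal R, M.IsMaximal ∧ ¬ I ≤ M := by
    by_contra hc
    push_neg at hc
    apply hIjac
    rw [Ideal.jacobson]
    exact le_sInf fun J hJ => hc J hJ.2
  obtain ⟨M, hM, hIM⟩ := hex
  have hsup : I ⊔ M = ⊤ := by
    by_contra hne
    exact hIM ((hM.eq_of_le hne le_sup_right) ▸ le_sup_left)
  have h1 : (1 : R) ∈ I ⊔ M := hsup ▸ Submodule.mem_top
  obtain ⟨i, hiI, m, hmM, him⟩ := Submodule.mem_sup.mp h1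
  have h1m : (1 : R) - m ∈ I := by
    have : (1 : R) - m = i := by rw [← him]; ring
    rw [this]; exact hiI
  have hpow : ∀ n : ℕ, (1 : R) - m ^ n ∈ I := by
    intro n
    induction n with
    | zero => simpa using I.zero_mem
    | succ n ih =>
      have : (1 : R) - m ^ (n + 1) = (1 - m ^ n) * m + (1 - m) := by ring
      rw [this]
      exact I.add_mem (I.mul_mem_right m ih) h1m
  have hmem : ∀ n : ℕ, Ideal.span {m ^ (n + 1)} ∈
      {J : Ideal R | J ≠ ⊤ ∧ ¬ J ≤ Ideal.jacobson (⊥ : Ideal R) ∧ I ⊔ J = ⊤} := by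
    intro n
    have hle : Ideal.span {m ^ (n + 1)} ≤ M :=
      (Ideal.span_singleton_le_iff_mem M).mpr (Ideal.pow_mem_of_mem M hmM (n + 1) n.succ_pos)
    refine ⟨?_, ?_, ?_⟩
    · intro htop
      exact hM.ne_top (eq_top_iff.mpr (htop ▸ hle))
    · intro hjac
      have hmj : m ^ (n + 1) ∈ Ideal.jacobson (⊥ : Ideal R) :=
        hjac (Ideal.subset_span rfl)
      have hu := Ideal.mem_jacobson_bot.mp hmj (-1)
      have heq : m ^ (n + 1) * (-1) + 1 = 1 - m ^ (n + 1) := by ring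
      rw [heq] at hu
      exact hItop (I.eq_top_of_isUnit_mem (hpow (n + 1)) hu)
    · rw [eq_top_iff]
      intro x _
      have h1' : (1 : R) ∈ I ⊔ Ideal.span {m ^ (n + 1)} :=
        Submodule.mem_sup.mpr ⟨1 - m ^ (n + 1), hpow (n + 1), m ^ (n + 1),
          Ideal.subset_span rfl, by ring⟩
      have : I ⊔ Ideal.span {m ^ (n + 1)} = ⊤ := Ideal.eq_top_of_isUnit_mem _ h1' isUnit_one
      rw [this]; trivial
  -- finiteness gives a collision
  obtain ⟨a, -, b, -, hab, heq⟩ :=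
    Set.infinite_univ.exists_ne_map_eq_of_mapsTo
      (f := fun n : ℕ => Ideal.span {m ^ (n + 1)}) (fun n _ => hmem n) hfin
  have key : ∀ p q : ℕ, p < q →
      Ideal.span {m ^ (p + 1)} = (Ideal.span {m ^ (q + 1)} : Ideal R) →
      ∃ e : R, e ^ 2 = e ∧ e ≠ 0 ∧ e ≠ 1 := by
    intro p q hpq hspan
    have hdvd : m ^ (q + 1) ∣ m ^ (p + 1) := by
      rw [← Ideal.mem_span_singleton, ← hspan]
      exact Ideal.subset_span rfl
    have h0 : m ^ (p + 1) ≠ 0 := by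
      intro h0'
      apply (hmem p).2.1
      rw [h0', Ideal.span_singleton_eq_bot.mpr rfl]
      exact bot_le
    exact aux_idem R m (p + 1) (q + 1) p.succ_pos (by omega) hdvd M hM.ne_top hmM h0
  rcases lt_or_gt_of_ne hab with hlt | hgt
  · exact key a b hlt heq
  · exact key b a hgt heq.symm
end

section
/- Let R be a commutative ring with unity such that Γ(R) has at least one vertex and every vertex of Γ(R) has finite degree (for every proper ideal I of R not contained in J(R), the set of proper ideals J with J not contained in J(R) and I + J = R is finite). Then R is isomorphic as a ring to a direct product R₁ × ⋯ × Rₙ × S, where each Rᵢ is a uniserial commutative ring (its ideals are totally ordered by inclusion) and S is a finite commutative ring. -/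
/-- A commutative ring is uniserial if its ideals are totally ordered by inclusion. -/
def IsUniserialRing (A : Type) [CommRing A] : Prop :=
  ∀ I J : Ideal A, I ≤ J ∨ J ≤ I

open Ideal

section Helpers

variable {A : Type} [CommRing A]

/-- In a ring with a unique maximal ideal, elements outside it are units. -/
lemma isUnit_of_not_mem_unique_max {M : Ideal A} (hM : M.IsMaximal)
    (huniq : ∀ M' : Ideal A, M'.IsMaximal → M' = M) {x : A} (hx : x ∉ M) : IsUnit x := by
  by_contra h
  obtain ⟨M', hM', hle⟩ := Ideal.exists_le_maximal (Ideal.span {x})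
    (by simpa [Ideal.span_singleton_eq_top] using h)
  exact hx ((huniq M' hM') ▸ hle (Ideal.subset_span rfl))

lemma span_add_mul_ne {M : Ideal A} (hM : M.IsMaximal)
    (huniq : ∀ M' : Ideal A, M'.IsMaximal → M' = M)
    {I J : Ideal A} {a b : A} (haI : a ∈ I) (haJ : a ∉ J) (hbJ : b ∈ J) (hbI : b ∉ I)
    {u v : A} (huv : IsUnit (u - v))
    (h : Ideal.span {a + u*b} = Ideal.span {a + v*b}) : False := by
  set C := Ideal.span {a + u*b} with hC
  have h1 : a + u*b ∈ C := Ideal.subset_span rfl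
  have h2 : a + v*b ∈ C := by rw [show C = Ideal.span {a + v*b} from h]; exact Ideal.subset_span rfl
  have hub : (u - v)*b ∈ C := by
    have := C.sub_mem h1 h2
    have e : (a + u*b) - (a + v*b) = (u-v)*b := by ring
    rwa [e] at this
  obtain ⟨w, hw⟩ := huv
  have hb : b ∈ C := by
    have := C.mul_mem_left (↑w⁻¹) hub
    rwa [← hw, ← mul_assoc, Units.inv_mul, one_mul] at this
  obtain ⟨z, hz⟩ := Ideal.mem_span_singleton'.mp hb
  have key : b*(1 - z*u) = z*a := by linear_combination -hz
  by_cases hu : IsUnit (1 - z*u)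
  · obtain ⟨w2, hw2⟩ := hu
    have : b = (↑w2⁻¹ * z) * a := by
      have := congrArg (fun t => (↑w2⁻¹ : A) * t) key
      rw [← hw2] at this
      rw [show b * ↑w2 = ↑w2 * b by ring] at this
      rw [← mul_assoc, Units.inv_mul, one_mul] at this
      rw [this]; ring
    exact hbI (this ▸ I.mul_mem_left _ haI)
  · have hmem : (1 - z*u) ∈ M := by
      by_contra hc
      exact hu (isUnit_of_not_mem_unique_max hM huniq hc)
    have hzu : (z*u) ∉ M := by
      intro hc
      exact hM.ne_top ((Ideal.eq_top_iff_one M).mpr (by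
        have := M.add_mem hmem hc; rwa [sub_add_cancel] at this))
    have hz' : IsUnit z := isUnit_of_mul_isUnit_left
      (isUnit_of_not_mem_unique_max hM huniq hzu)
    obtain ⟨w3, hw3⟩ := hz'
    have : a = ↑w3⁻¹ * (b * (1 - z*u)) := by
      rw [key, ← hw3, ← mul_assoc, Units.inv_mul, one_mul]
    exact haJ (this ▸ J.mul_mem_left _ (J.mul_mem_right _ hbJ))

end Helpers
section Helpers2
open Ideal
variable {A : Type} [CommRing A]


lemma comap_mk_injective (I : Ideal A) :
    Function.Injective (fun K : Ideal (A ⧸ I) => Ideal.comap (Ideal.Quotient.mk I) K) := by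
  intro K1 K2 h
  have h1 := Ideal.map_comap_of_surjective _ Ideal.Quotient.mk_surjective K1
  have h2 := Ideal.map_comap_of_surjective _ Ideal.Quotient.mk_surjective K2
  simp only at h
  rw [← h1, ← h2, h]

lemma finite_ideal_quot [Finite (Ideal A)] (I : Ideal A) : Finite (Ideal (A ⧸ I)) :=
  Finite.of_injective _ (comap_mk_injective I)

lemma card_ideal_quot_lt [Finite (Ideal A)] {I : Ideal A} (hI : I ≠ ⊥) :
    Nat.card (Ideal (A ⧸ I)) < Nat.card (Ideal A) := by
  have hfin : Finite (Ideal (A ⧸ I)) := finite_ideal_quot I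
  cases nonempty_fintype (Ideal A)
  cases nonempty_fintype (Ideal (A ⧸ I))
  rw [Nat.card_eq_fintype_card, Nat.card_eq_fintype_card]
  refine Fintype.card_lt_of_injective_of_notMem _ (comap_mk_injective I) (b := ⊥) ?_
  rintro ⟨K, hK⟩
  simp only at hK
  apply hI
  have h1 : I ≤ Ideal.comap (Ideal.Quotient.mk I) K := by
    intro x hx
    show Ideal.Quotient.mk I x ∈ K
    rw [Ideal.Quotient.eq_zero_iff_mem.mpr hx]
    exact K.zero_mem
  rw [hK] at h1
  exact le_bot_iff.mp h1

lemma residue_finite [Finite (Ideal A)] {M : Ideal A} (hM : M.IsMaximal)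
    (huniq : ∀ M' : Ideal A, M'.IsMaximal → M' = M) (hnu : ¬ IsUniserialRing A) :
    Finite (A ⧸ M) := by
  unfold IsUniserialRing at hnu
  push_neg at hnu
  obtain ⟨I, J, hIJ, hJI⟩ := hnu
  obtain ⟨a, haI, haJ⟩ := SetLike.not_le_iff_exists.mp hIJ
  obtain ⟨b, hbJ, hbI⟩ := SetLike.not_le_iff_exists.mp hJI
  obtain ⟨σ, hσ⟩ := (Ideal.Quotient.mk_surjective (I := M)).hasRightInverse
  apply Finite.of_injective (fun q : A ⧸ M => Ideal.span {a + σ q * b})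
  intro q1 q2 h
  by_contra hne
  have hnm : σ q1 - σ q2 ∉ M := by
    intro hmem
    exact hne (by rw [← hσ q1, ← hσ q2]; exact Ideal.Quotient.eq.mpr hmem)
  exact span_add_mul_ne hM huniq haI haJ hbJ hbI
    (isUnit_of_not_mem_unique_max hM huniq hnm) h

lemma finite_of_unique_max_finite_residue :
    ∀ (n : ℕ) (A : Type) (_ : CommRing A) (_ : Finite (Ideal A))
      (M : Ideal A) (_ : M.IsMaximal) (_ : ∀ M' : Ideal A, M'.IsMaximal → M' = M),
      Nat.card (Ideal A) ≤ n → Finite (A ⧸ M) → Finite A := by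
  intro n
  induction n with
  | zero =>
    intro A _ _ M _ _ hcard _
    have : 0 < Nat.card (Ideal A) := Nat.card_pos
    omega
  | succ n ih =>
    intro A _ _ M hM huniq hcard hres
    by_cases hbot : M = ⊥
    · -- mk M is injective
      have hinj : Function.Injective (Ideal.Quotient.mk M) := by
        rw [RingHom.injective_iff_ker_eq_bot, Ideal.mk_ker]
        exact hbot
      exact Finite.of_injective _ hinj
    · -- find a minimal nonzero ideal L
      have hSfin : ({I : Ideal A | I ≠ ⊥}).Finite := Set.toFinite _
      obtain ⟨L, hLS, hLmin⟩ : ∃ L ∈ ({I : Ideal A | I ≠ ⊥}),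
          ∀ a' ∈ ({I : Ideal A | I ≠ ⊥}), id a' ≤ id L → id L = id a' := by
        obtain ⟨L, hLS, hL⟩ := hSfin.exists_minimalFor id _ ⟨M, hbot⟩
        exact ⟨L, hLS, fun a' ha' h => le_antisymm (hL ha' h) h⟩
      simp only [id] at hLmin
      have hLne : L ≠ ⊥ := hLS
      -- L ≤ M
      have hLM : L ≤ M := by
        have hLtop : L ≠ ⊤ := by
          intro htop
          have := hLmin M hbot (by rw [htop]; exact le_top)
          exact hM.ne_top (by rw [← this, htop])
        obtain ⟨M', hM', hle⟩ := Ideal.exists_le_maximal L hLtop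
        rwa [huniq M' hM'] at hle
      obtain ⟨x, hxL, hx0⟩ := Submodule.exists_mem_ne_zero_of_ne_bot hLne
      have hspan : Ideal.span {x} = L := by
        have hle : Ideal.span {x} ≤ L := by
          rw [Ideal.span_le]; simpa using hxL
        have hnb : Ideal.span {x} ≠ ⊥ := by
          simpa [Ideal.span_singleton_eq_bot] using hx0
        exact (hLmin _ hnb hle).symm
      -- M * x = 0
      have hML : M * L = ⊥ := by
        by_contra hMLne
        have hle : M * L ≤ L := Ideal.mul_le_right
        have := hLmin _ hMLne hle
        -- M * L = L, so x ∈ M * span{x}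
        have hx : x ∈ M * Ideal.span {x} := by rw [hspan, ← this]; exact hxL
        obtain ⟨m, hmM, hmx⟩ := Ideal.mem_mul_span_singleton.mp hx
        have h1m : IsUnit (1 - m) := by
          apply isUnit_of_not_mem_unique_max hM huniq
          intro hc
          exact hM.ne_top ((Ideal.eq_top_iff_one M).mpr (by
            have := M.add_mem hc hmM; rwa [sub_add_cancel] at this))
        obtain ⟨w, hw⟩ := h1m
        apply hx0
        have : (1 - m) * x = 0 := by
          have : x - m * x = x - x := by rw [hmx]
          rw [sub_self] at this
          linear_combination this
        calc x = ↑w⁻¹ * ((1-m)*x) := by rw [← hw, ← mul_assoc, Units.inv_mul, one_mul]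
        _ = 0 := by rw [this, mul_zero]
      have hMx : ∀ m ∈ M, m * x = 0 := by
        intro m hm
        have := Ideal.mul_mem_mul hm hxL
        rw [hML] at this
        simpa using this
      -- L is finite as a set
      obtain ⟨σ, hσ⟩ := (Ideal.Quotient.mk_surjective (I := M)).hasRightInverse
      have hLsub : (L : Set A) ⊆ Set.range (fun q : A ⧸ M => σ q * x) := by
        intro l hl
        rw [← hspan] at hl
        obtain ⟨c, hc⟩ := Ideal.mem_span_singleton'.mp hl
        refine ⟨Ideal.Quotient.mk M c, ?_⟩
        have hmem : σ (Ideal.Quotient.mk M c) - c ∈ M :=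
          Ideal.Quotient.eq.mp (by rw [hσ])
        have := hMx _ hmem
        simp only []
        rw [sub_mul] at this
        rw [sub_eq_zero] at this
        rw [this, hc]
      have hLfin : (L : Set A).Finite := Set.Finite.subset (Set.finite_range _) hLsub
      haveI hLfin' : Finite (L : Set A) := hLfin.to_subtype
      -- quotient A ⧸ L is finite by induction
      haveI : Finite (Ideal (A ⧸ L)) := finite_ideal_quot L
      have hcard' : Nat.card (Ideal (A ⧸ L)) ≤ n := by
        have := card_ideal_quot_lt hLne
        omega
      -- unique maximal ideal of A ⧸ L
      have hLtop : L ≠ ⊤ := fun htop => hM.ne_top (top_le_iff.mp (htop ▸ hLM))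
      haveI : Nontrivial (A ⧸ L) := Ideal.Quotient.nontrivial_iff.mpr hLtop
      obtain ⟨M', hM'⟩ := Ideal.exists_maximal (A ⧸ L)
      have huniq' : ∀ M'' : Ideal (A ⧸ L), M''.IsMaximal → M'' = M' := by
        intro M'' hM''
        have hc1 : (Ideal.comap (Ideal.Quotient.mk L) M'') = M := by
          haveI := hM''
          exact huniq _ (Ideal.comap_isMaximal_of_surjective _ Ideal.Quotient.mk_surjective)
        have hc2 : (Ideal.comap (Ideal.Quotient.mk L) M') = M := by
          haveI := hM'
          exact huniq _ (Ideal.comap_isMaximal_of_surjective _ Ideal.Quotient.mk_surjective)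
        exact comap_mk_injective L (by simp only [hc1, hc2])
      -- residue field of A ⧸ L is finite
      have hM'map : M' = Ideal.map (Ideal.Quotient.mk L) M := by
        have hc2 : (Ideal.comap (Ideal.Quotient.mk L) M') = M := by
          haveI := hM'
          exact huniq _ (Ideal.comap_isMaximal_of_surjective _ Ideal.Quotient.mk_surjective)
        rw [← hc2, Ideal.map_comap_of_surjective _ Ideal.Quotient.mk_surjective]
      haveI hres' : Finite ((A ⧸ L) ⧸ M') := by
        have e := DoubleQuot.quotQuotEquivQuotOfLE hLM
        rw [hM'map]
        exact Finite.of_equiv _ e.symm.toEquiv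
      haveI hQf : Finite (A ⧸ L) := ih (A ⧸ L) _ inferInstance M' hM' huniq' hcard' hres'
      -- A injects into (A ⧸ L) × L
      obtain ⟨τ, hτ⟩ := (Ideal.Quotient.mk_surjective (I := L)).hasRightInverse
      have hinj : Function.Injective (fun a : A =>
          ((Ideal.Quotient.mk L a : A ⧸ L),
           (⟨a - τ (Ideal.Quotient.mk L a), by
              exact Ideal.Quotient.eq.mp (by rw [hτ])⟩ : (L : Set A)))) := by
        intro a1 a2 h
        have h1 : Ideal.Quotient.mk L a1 = Ideal.Quotient.mk L a2 := congrArg Prod.fst h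
        have h2 := congrArg (fun p => (p.2 : A)) h
        simp only [h1] at h2
        exact sub_left_injective h2
      exact Finite.of_injective _ hinj

end Helpers2
section Helpers3
open Ideal
variable {A : Type} [CommRing A]

lemma idem_from_spans {g : A} {M₁ M₂ : Ideal A} (hM1 : M₁.IsMaximal) (hM2 : M₂.IsMaximal)
    (hg1 : g ∈ M₁) (hg2 : g ∉ M₂) {n m : ℕ} (hn : 1 ≤ n) (hnm : n < m)
    (hspan : Ideal.span {g ^ n} = Ideal.span {g ^ m}) :
    ∃ e : A, e * e = e ∧ e ≠ 0 ∧ e ≠ 1 := by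
  have hgn : g ^ n ∈ Ideal.span {g ^ m} := by
    rw [← hspan]; exact Ideal.subset_span rfl
  obtain ⟨c, hc⟩ := Ideal.mem_span_singleton'.mp hgn
  set d := m - n with hd
  have hd1 : 1 ≤ d := by omega
  have hmd : m = n + d := by omega
  have hiter : ∀ t : ℕ, g ^ n = c ^ t * g ^ (n + t * d) := by
    intro t
    induction t with
    | zero => simp
    | succ t iht =>
      have key : g ^ (n + (t+1) * d) = g ^ (t * d) * g ^ m := by
        rw [← pow_add, hmd]; congr 1; ring
      rw [pow_succ, key]
      calc g ^ n = c ^ t * g ^ (n + t*d) := iht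
      _ = c ^ t * (g ^ (t*d) * g ^ n) := by rw [← pow_add]; congr 2; ring
      _ = c ^ t * (g ^ (t*d) * (c * g ^ m)) := by rw [hc]
      _ = c ^ t * c * (g ^ (t*d) * g ^ m) := by ring
  set e := c ^ n * g ^ (n * d) with he
  have he1 : g ^ n * e = g ^ n := by
    rw [he]
    calc g ^ n * (c ^ n * g ^ (n * d)) = c ^ n * g ^ (n + n * d) := by
          rw [pow_add]; ring
    _ = g ^ n := (hiter n).symm
  have hee : e * e = e := by
    have hsplit : e = (c ^ n * g ^ (n * d - n)) * g ^ n := by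
      rw [he, mul_assoc, ← pow_add]
      congr 2
      have h2 : n ≤ n * d := Nat.le_mul_of_pos_right n (by omega)
      omega
    calc e * e = (c ^ n * g ^ (n * d - n)) * (g ^ n * e) := by rw [hsplit]; ring
    _ = (c ^ n * g ^ (n * d - n)) * g ^ n := by rw [he1]
    _ = e := hsplit.symm
  refine ⟨e, hee, ?_, ?_⟩
  · intro h0
    rw [h0, mul_zero] at he1
    have : g ^ n ∈ M₂ := by rw [← he1]; exact M₂.zero_mem
    exact hg2 (hM2.isPrime.mem_of_pow_mem n this)
  · intro h1
    have heM : e ∈ M₁ := by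
      rw [he]
      apply M₁.mul_mem_left
      have : g ^ (n*d) = g ^ (n*d - 1) * g := by
        rw [← pow_succ]
        congr 1
        have h2 : 0 < n * d := Nat.mul_pos (by omega) (by omega)
        omega
      rw [this]
      exact M₁.mul_mem_left _ hg1
    rw [h1] at heM
    exact hM1.ne_top ((Ideal.eq_top_iff_one M₁).mpr heM)

lemma exists_idempotent_of_finite_vertices
    (hV : ({I : Ideal A | I ≠ ⊤ ∧ ¬ I ≤ Ideal.jacobson (⊥ : Ideal A)}).Finite)
    {M₁ M₂ : Ideal A} (hM1 : M₁.IsMaximal) (hM2 : M₂.IsMaximal) (hne : M₁ ≠ M₂) :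
    ∃ e : A, e * e = e ∧ e ≠ 0 ∧ e ≠ 1 := by
  have hnle : ¬ M₁ ≤ M₂ := fun hle => hne (hM1.eq_of_le hM2.ne_top hle)
  obtain ⟨g, hg1, hg2⟩ := SetLike.not_le_iff_exists.mp hnle
  have hjac : Ideal.jacobson (⊥ : Ideal A) ≤ M₂ := sInf_le ⟨bot_le, hM2⟩
  have hmem : ∀ k : ℕ, Ideal.span {g ^ (k+1)} ∈
      {I : Ideal A | I ≠ ⊤ ∧ ¬ I ≤ Ideal.jacobson (⊥ : Ideal A)} := by
    intro k
    constructor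
    · intro htop
      apply hM1.ne_top
      rw [eq_top_iff, ← htop, Ideal.span_le]
      intro y hy
      rw [Set.mem_singleton_iff] at hy
      subst hy
      rw [pow_succ]
      exact M₁.mul_mem_left _ hg1
    · intro hle
      apply hg2
      apply hM2.isPrime.mem_of_pow_mem (k+1)
      exact hjac (hle (Ideal.subset_span rfl))
  haveI := hV.to_subtype
  obtain ⟨k, l, hkl, heq⟩ := Finite.exists_ne_map_eq_of_infinite
    (fun k : ℕ => (⟨Ideal.span {g ^ (k+1)}, hmem k⟩ : {I : Ideal A // I ∈ _}))
  have heq' : Ideal.span {g ^ (k+1)} = Ideal.span {g ^ (l+1)} := congrArg Subtype.val heq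
  rcases Nat.lt_or_ge k l with h | h
  · exact idem_from_spans hM1 hM2 hg1 hg2 (by omega) (show k+1 < l+1 by omega) heq'
  · have hlk : l < k := by omega
    exact idem_from_spans hM1 hM2 hg1 hg2 (by omega) (show l+1 < k+1 by omega) heq'.symm

lemma split_of_idempotent {e : A} (hee : e * e = e) :
    Nonempty (A ≃+* (A ⧸ Ideal.span {e}) × (A ⧸ Ideal.span {1 - e})) := by
  have hcop : IsCoprime (Ideal.span {e} : Ideal A) (Ideal.span {1-e}) := by
    rw [Ideal.isCoprime_iff_sup_eq, Ideal.eq_top_iff_one]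
    exact Submodule.mem_sup.mpr ⟨e, Ideal.subset_span rfl, 1-e, Ideal.subset_span rfl, by ring⟩
  have hinf : (Ideal.span {e} : Ideal A) ⊓ Ideal.span {1-e} = ⊥ := by
    apply le_antisymm _ bot_le
    rintro x ⟨hx1, hx2⟩
    obtain ⟨a, ha⟩ := Ideal.mem_span_singleton'.mp hx1
    obtain ⟨b, hb⟩ := Ideal.mem_span_singleton'.mp hx2
    have : x * e = x := by
      rw [← ha, mul_assoc, hee]
    have h2 : x * e = 0 := by
      rw [← hb, mul_assoc]
      have : (1 - e) * e = 0 := by linear_combination -hee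
      rw [this, mul_zero]
    rw [Submodule.mem_bot, ← this, h2]
  have hbij : Function.Bijective (Ideal.Quotient.mk (Ideal.span {e} ⊓ Ideal.span {1-e})) := by
    constructor
    · rw [RingHom.injective_iff_ker_eq_bot, Ideal.mk_ker]
      exact hinf
    · exact Ideal.Quotient.mk_surjective
  exact ⟨(RingEquiv.ofBijective _ hbij).trans
    (Ideal.quotientInfEquivQuotientProd _ _ hcop)⟩

end Helpers3
section Product
open Ideal

/-- The internal goal: decomposition with a general finite index type. -/
def GoalI (A : Type) [CommRing A] : Prop :=
  ∃ (ι : Type) (_ : Fintype ι) (Rs : ι → Type) (_ : ∀ i, CommRing (Rs i))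
    (S : Type) (_ : CommRing S),
    (∀ i, IsUniserialRing (Rs i)) ∧ Finite S ∧
      Nonempty (A ≃+* (∀ i, Rs i) × S)

lemma goal_of_ringEquiv {A B : Type} [CommRing A] [CommRing B]
    (e : A ≃+* B) (h : GoalI B) : GoalI A := by
  obtain ⟨ι, hι, Rs, hRs, S, hS, hu, hfin, ⟨f⟩⟩ := h
  exact ⟨ι, hι, Rs, hRs, S, hS, hu, hfin, ⟨e.trans f⟩⟩

def sumElimCommRing {ι₁ ι₂ : Type} (Rs₁ : ι₁ → Type) (Rs₂ : ι₂ → Type)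
    (h₁ : ∀ i, CommRing (Rs₁ i)) (h₂ : ∀ i, CommRing (Rs₂ i)) :
    ∀ i : ι₁ ⊕ ι₂, CommRing (Sum.elim Rs₁ Rs₂ i) := fun i =>
  match i with
  | .inl a => h₁ a
  | .inr b => h₂ b

lemma goal_prod {A B : Type} [CommRing A] [CommRing B]
    (hA : GoalI A) (hB : GoalI B) : GoalI (A × B) := by
  obtain ⟨ι₁, hι₁, Rs₁, hRs₁, S₁, hS₁, hu₁, hfin₁, ⟨f₁⟩⟩ := hA
  obtain ⟨ι₂, hι₂, Rs₂, hRs₂, S₂, hS₂, hu₂, hfin₂, ⟨f₂⟩⟩ := hB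
  letI := hι₁; letI := hι₂; letI := hRs₁; letI := hRs₂; letI := hS₁; letI := hS₂
  letI instSum := sumElimCommRing Rs₁ Rs₂ hRs₁ hRs₂
  refine ⟨ι₁ ⊕ ι₂, inferInstance, Sum.elim Rs₁ Rs₂, instSum, S₁ × S₂, inferInstance,
    ?_, ?_, ?_⟩
  · intro i
    cases i with
    | inl a => exact hu₁ a
    | inr b => exact hu₂ b
  · haveI := hfin₁; haveI := hfin₂; exact inferInstance
  · -- build the equivalence
    have e1 : (A × B) ≃+* ((∀ i, Rs₁ i) × S₁) × ((∀ i, Rs₂ i) × S₂) :=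
      RingEquiv.prodCongr f₁ f₂
    have e2 : ((∀ i, Rs₁ i) × S₁) × ((∀ i, Rs₂ i) × S₂) ≃+*
        ((∀ i, Rs₁ i) × (∀ i, Rs₂ i)) × (S₁ × S₂) :=
      { toFun := fun x => ((x.1.1, x.2.1), (x.1.2, x.2.2))
        invFun := fun y => ((y.1.1, y.2.1), (y.1.2, y.2.2))
        left_inv := fun x => rfl
        right_inv := fun y => rfl
        map_mul' := fun x y => rfl
        map_add' := fun x y => rfl }
    have e3 : ((∀ i, Rs₁ i) × (∀ i, Rs₂ i)) ≃+* (∀ i : ι₁ ⊕ ι₂, Sum.elim Rs₁ Rs₂ i) :=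
      { toFun := fun p i => match i with
          | .inl a => p.1 a
          | .inr b => p.2 b
        invFun := fun f => (fun a => f (.inl a), fun b => f (.inr b))
        left_inv := fun p => rfl
        right_inv := fun f => by funext i; cases i <;> rfl
        map_mul' := fun p q => by funext i; cases i <;> rfl
        map_add' := fun p q => by funext i; cases i <;> rfl }
    have e4 : ((∀ i, Rs₁ i) × (∀ i, Rs₂ i)) × (S₁ × S₂) ≃+*
        (∀ i : ι₁ ⊕ ι₂, Sum.elim Rs₁ Rs₂ i) × (S₁ × S₂) :=
      RingEquiv.prodCongr e3 (RingEquiv.refl _)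
    exact ⟨(e1.trans e2).trans e4⟩

lemma goal_finite {A : Type} [CommRing A] (h : Finite A) : GoalI A := by
  refine ⟨PEmpty, inferInstance, fun _ => PUnit, fun _ => inferInstance, A, inferInstance,
    ?_, h, ?_⟩
  · intro i; exact i.elim
  · refine ⟨{ toFun := fun a => (fun i => PUnit.unit, a)
              invFun := fun p => p.2
              left_inv := fun a => rfl
              right_inv := fun p => by
                refine Prod.ext ?_ rfl
                funext i; exact i.elim
              map_mul' := fun a b => by
                refine Prod.ext ?_ rfl
                funext i; exact i.elim
              map_add' := fun a b => by
                refine Prod.ext ?_ rfl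
                funext i; exact i.elim }⟩

lemma goal_uniserial {A : Type} [CommRing A] (h : IsUniserialRing A) : GoalI A := by
  refine ⟨PUnit, inferInstance, fun _ => A, fun _ => inferInstance, PUnit, inferInstance,
    fun _ => h, inferInstance, ?_⟩
  refine ⟨{ toFun := fun a => (fun _ => a, PUnit.unit)
            invFun := fun p => p.1 PUnit.unit
            left_inv := fun a => rfl
            right_inv := fun p => by
              refine Prod.ext ?_ (Subsingleton.elim _ _)
              funext i; rfl
            map_mul' := fun a b => rfl
            map_add' := fun a b => rfl }⟩

end Product
section Main
open Ideal

lemma not_mem_jacobson_of_idem {A : Type} [CommRing A] {x : A}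
    (hx : x * x = x) (h0 : x ≠ 0) : x ∉ Ideal.jacobson (⊥ : Ideal A) := by
  intro hmem
  have hu := (Ideal.mem_jacobson_bot.mp hmem) (-1)
  rw [show x * -1 + 1 = 1 - x by ring] at hu
  obtain ⟨w, hw⟩ := hu
  apply h0
  have hz : (1 - x) * x = 0 := by linear_combination -hx
  calc x = ↑w⁻¹ * (↑w * x) := by rw [← mul_assoc, Units.inv_mul, one_mul]
  _ = 0 := by rw [hw, hz, mul_zero]

lemma finite_ideal_quot_of_vertices {A : Type} [CommRing A]
    (hV : ({I : Ideal A | I ≠ ⊤ ∧ ¬ I ≤ Ideal.jacobson (⊥ : Ideal A)}).Finite)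
    {x : A} (hxjac : x ∉ Ideal.jacobson (⊥ : Ideal A)) :
    Finite (Ideal (A ⧸ Ideal.span {x})) := by
  have hmem : ∀ K : Ideal (A ⧸ Ideal.span {x}),
      Ideal.comap (Ideal.Quotient.mk (Ideal.span {x})) K ∈
        insert ⊤ {I : Ideal A | I ≠ ⊤ ∧ ¬ I ≤ Ideal.jacobson (⊥ : Ideal A)} := by
    intro K
    by_cases htop : Ideal.comap (Ideal.Quotient.mk (Ideal.span {x})) K = ⊤
    · exact Set.mem_insert_iff.mpr (Or.inl htop)
    · right
      refine ⟨htop, ?_⟩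
      intro hle
      apply hxjac
      apply hle
      show Ideal.Quotient.mk (Ideal.span {x}) x ∈ K
      have hz : Ideal.Quotient.mk (Ideal.span {x}) x = 0 :=
        Ideal.Quotient.eq_zero_iff_mem.mpr (Ideal.subset_span rfl)
      rw [hz]
      exact K.zero_mem
  haveI := (hV.insert ⊤).to_subtype
  apply Finite.of_injective (fun K : Ideal (A ⧸ Ideal.span {x}) =>
    (⟨_, hmem K⟩ : ↥(insert ⊤ {I : Ideal A | I ≠ ⊤ ∧ ¬ I ≤ Ideal.jacobson (⊥ : Ideal A)})))
  intro K1 K2 h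
  exact comap_mk_injective _ (congrArg Subtype.val h)

lemma main_induction : ∀ (n : ℕ) (A : Type) (_ : CommRing A) (_ : Finite (Ideal A)),
    Nat.card (Ideal A) ≤ n → GoalI A := by
  intro n
  induction n with
  | zero =>
    intro A _ _ hcard
    have : 0 < Nat.card (Ideal A) := Nat.card_pos
    omega
  | succ n ih =>
    intro A _ _ hcard
    by_cases hsub : Subsingleton A
    · exact goal_finite (Finite.of_subsingleton)
    · haveI : Nontrivial A := not_subsingleton_iff_nontrivial.mp hsub
      obtain ⟨M₁, hM1⟩ := Ideal.exists_maximal A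
      by_cases huniq : ∀ M' : Ideal A, M'.IsMaximal → M' = M₁
      · by_cases huni : IsUniserialRing A
        · exact goal_uniserial huni
        · exact goal_finite (finite_of_unique_max_finite_residue
            (Nat.card (Ideal A)) A _ inferInstance M₁ hM1 huniq le_rfl
            (residue_finite hM1 huniq huni))
      · push_neg at huniq
        obtain ⟨M₂, hM2, hne2⟩ := huniq
        have hV : ({I : Ideal A | I ≠ ⊤ ∧ ¬ I ≤ Ideal.jacobson (⊥ : Ideal A)}).Finite :=
          Set.toFinite _
        obtain ⟨e, hee, he0, he1⟩ := exists_idempotent_of_finite_vertices hV hM2 hM1 hne2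
        obtain ⟨f⟩ := split_of_idempotent hee
        have hIe : Ideal.span {e} ≠ (⊥ : Ideal A) := by
          rw [Ne, Ideal.span_singleton_eq_bot]; exact he0
        have hI1e : Ideal.span {1-e} ≠ (⊥ : Ideal A) := by
          rw [Ne, Ideal.span_singleton_eq_bot, sub_eq_zero]
          exact fun h => he1 h.symm
        haveI : Finite (Ideal (A ⧸ Ideal.span {e})) := finite_ideal_quot _
        haveI : Finite (Ideal (A ⧸ Ideal.span {1-e})) := finite_ideal_quot _
        have h1 := card_ideal_quot_lt hIe
        have h2 := card_ideal_quot_lt hI1e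
        exact goal_of_ringEquiv f (goal_prod
          (ih _ _ inferInstance (by omega)) (ih _ _ inferInstance (by omega)))

end Main
/-- If the co-maximal ideal graph `Γ(R)` has at least one vertex and every vertex has
finite degree, then `R` is isomorphic to a direct product of finitely many uniserial
commutative rings and a finite commutative ring. -/
theorem prod_uniserial_of_all_degrees_finite
    (R : Type) [CommRing R]
    (hne : ∃ I : Ideal R, I ≠ ⊤ ∧ ¬ I ≤ Ideal.jacobson (⊥ : Ideal R))
    (hdeg : ∀ I : Ideal R, I ≠ ⊤ → ¬ I ≤ Ideal.jacobson (⊥ : Ideal R) →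
      {J : Ideal R | J ≠ ⊤ ∧ ¬ J ≤ Ideal.jacobson (⊥ : Ideal R) ∧ I ⊔ J = ⊤}.Finite) :
    ∃ (n : ℕ) (Rs : Fin n → Type) (_ : ∀ i, CommRing (Rs i))
      (S : Type) (_ : CommRing S),
      (∀ i, IsUniserialRing (Rs i)) ∧ Finite S ∧
        Nonempty (R ≃+* (∀ i, Rs i) × S) := by
  classical
  obtain ⟨I₀, hI0top, hI0jac⟩ := hne
  haveI : Nontrivial R := by
    by_contra h
    haveI : Subsingleton R := not_nontrivial_iff_subsingleton.mp h
    exact hI0top (Subsingleton.elim _ _)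
  obtain ⟨M₁, hM1, hleM1⟩ := Ideal.exists_le_maximal I₀ hI0top
  have hM2' : ∃ M : Ideal R, M.IsMaximal ∧ ¬ I₀ ≤ M := by
    by_contra h; push_neg at h
    exact hI0jac (le_sInf fun J hJ => h J hJ.2)
  obtain ⟨M₂, hM2, hnleM2⟩ := hM2'
  have hMne : M₁ ≠ M₂ := fun h => hnleM2 (h ▸ hleM1)
  -- every maximal ideal is a vertex
  have hvert : ∀ M : Ideal R, M.IsMaximal → M ≠ ⊤ ∧ ¬ M ≤ Ideal.jacobson (⊥ : Ideal R) := by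
    intro M hM
    refine ⟨hM.ne_top, ?_⟩
    intro hle
    have h1 : M ≤ M₁ := hle.trans (sInf_le ⟨bot_le, hM1⟩)
    have h2 : M ≤ M₂ := hle.trans (sInf_le ⟨bot_le, hM2⟩)
    exact hMne ((hM.eq_of_le hM1.ne_top h1).symm.trans (hM.eq_of_le hM2.ne_top h2))
  -- there are finitely many maximal ideals
  have hmaxfin : ({M : Ideal R | M.IsMaximal}).Finite := by
    apply Set.Finite.subset (Set.Finite.insert M₁ (hdeg M₁ hM1.ne_top (hvert M₁ hM1).2))
    intro M hM
    by_cases h : M = M₁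
    · exact Set.mem_insert_iff.mpr (Or.inl h)
    · right
      refine ⟨(hvert M hM).1, (hvert M hM).2, ?_⟩
      by_contra hsup
      have heq : M₁ = M₁ ⊔ M := hM1.eq_of_le hsup le_sup_left
      have hMle : M ≤ M₁ := le_sup_right.trans heq.ge
      exact h (hM.eq_of_le hM1.ne_top hMle)
  -- the vertex set is finite
  have hV : ({I : Ideal R | I ≠ ⊤ ∧ ¬ I ≤ Ideal.jacobson (⊥ : Ideal R)}).Finite := by
    have hsub : {I : Ideal R | I ≠ ⊤ ∧ ¬ I ≤ Ideal.jacobson (⊥ : Ideal R)} ⊆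
        ⋃ M ∈ {M : Ideal R | M.IsMaximal},
          {J : Ideal R | J ≠ ⊤ ∧ ¬ J ≤ Ideal.jacobson (⊥ : Ideal R) ∧ M ⊔ J = ⊤} := by
      rintro I ⟨hItop, hIjac⟩
      have hexM : ∃ M : Ideal R, M.IsMaximal ∧ ¬ I ≤ M := by
        by_contra h; push_neg at h
        exact hIjac (le_sInf fun J hJ => h J hJ.2)
      obtain ⟨M, hM, hnle⟩ := hexM
      refine Set.mem_biUnion hM ⟨hItop, hIjac, ?_⟩
      by_contra hsup
      have heq : M = M ⊔ I := hM.eq_of_le hsup le_sup_left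
      exact hnle (le_sup_right.trans heq.ge)
    exact Set.Finite.subset
      (Set.Finite.biUnion hmaxfin (fun M hM => hdeg M hM.ne_top (hvert M hM).2)) hsub
  -- get a nontrivial idempotent and split the ring
  obtain ⟨e, hee, he0, he1⟩ := exists_idempotent_of_finite_vertices hV hM1 hM2 hMne
  obtain ⟨f⟩ := split_of_idempotent hee
  have h1e : (1 - e) * (1 - e) = 1 - e := by linear_combination hee
  have h1e0 : (1 : R) - e ≠ 0 := by
    rw [Ne, sub_eq_zero]; exact fun h => he1 h.symm
  haveI : Finite (Ideal (R ⧸ Ideal.span {e})) :=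
    finite_ideal_quot_of_vertices hV (not_mem_jacobson_of_idem hee he0)
  haveI : Finite (Ideal (R ⧸ Ideal.span {1 - e})) :=
    finite_ideal_quot_of_vertices hV (not_mem_jacobson_of_idem h1e h1e0)
  have hgoal : GoalI R :=
    goal_of_ringEquiv f (goal_prod
      (main_induction (Nat.card (Ideal (R ⧸ Ideal.span {e}))) _ _ inferInstance le_rfl)
      (main_induction (Nat.card (Ideal (R ⧸ Ideal.span {1 - e}))) _ _ inferInstance le_rfl))
  -- convert to the `Fin` indexed statement
  obtain ⟨ι, hι, Rs, hRs, S, hS, hu, hfinS, ⟨g⟩⟩ := hgoal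
  letI := hι; letI := hRs; letI := hS
  refine ⟨Fintype.card ι, fun j => Rs ((Fintype.equivFin ι).symm j),
    fun j => hRs _, S, hS, fun j => hu _, hfinS, ?_⟩
  have epc : (∀ i : ι, Rs i) ≃+*
      (∀ j : Fin (Fintype.card ι), Rs ((Fintype.equivFin ι).symm j)) :=
    { Equiv.piCongrLeft' Rs (Fintype.equivFin ι) with
      map_mul' := fun a b => rfl
      map_add' := fun a b => rfl }
  exact ⟨g.trans (RingEquiv.prodCongr epc (RingEquiv.refl S))⟩
end

section
/- Let R be a commutative ring with unity having four pairwise distinct maximal ideals m₁, m₂, m₃, m₄. Then the six ideals m₁, m₂, m₁m₂, m₃, m₄, m₃m₄ are pairwise distinct proper ideals of R, none of them is contained in J(R), and every ideal in {m₁, m₂, m₁m₂} is comaximal with every ideal in {m₃, m₄, m₃m₄} (the sum of any such pair is R). In particular, these six ideals form a complete bipartite subgraph K₃,₃ in Γ(R). -/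
private lemma prod_le_max {R : Type} [CommRing R] {a b p : Ideal R}
    (hp : p.IsPrime) (ha : a ≠ p) (hb : b ≠ p)
    (hap : a.IsMaximal) (hbp : b.IsMaximal) : ¬ a * b ≤ p := by
  intro h
  rcases (Ideal.IsPrime.mul_le hp).mp h with h' | h'
  · exact ha (hap.eq_of_le hp.ne_top h')
  · exact hb (hbp.eq_of_le hp.ne_top h')

private lemma prod_ne_self {R : Type} [CommRing R] {a b : Ideal R}
    (ha : a.IsMaximal) (hb : b.IsMaximal) (hab : a ≠ b) : a * b ≠ a := by
  intro h
  exact hab (ha.eq_of_le hb.ne_top ((le_of_eq h.symm).trans Ideal.mul_le_right))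

/-- If `R` has four pairwise distinct maximal ideals `m₁, m₂, m₃, m₄`, then the six
ideals `m₁, m₂, m₁m₂, m₃, m₄, m₃m₄` are pairwise distinct proper ideals, none contained
in `J(R)`, and each of `m₁, m₂, m₁m₂` is comaximal with each of `m₃, m₄, m₃m₄`; in
particular they form a `K₃,₃` in `Γ(R)`. -/
theorem four_maximal_ideals_K33
    (R : Type) [CommRing R] (m₁ m₂ m₃ m₄ : Ideal R)
    (h₁ : m₁.IsMaximal) (h₂ : m₂.IsMaximal) (h₃ : m₃.IsMaximal) (h₄ : m₄.IsMaximal)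
    (h₁₂ : m₁ ≠ m₂) (h₁₃ : m₁ ≠ m₃) (h₁₄ : m₁ ≠ m₄)
    (h₂₃ : m₂ ≠ m₃) (h₂₄ : m₂ ≠ m₄) (h₃₄ : m₃ ≠ m₄) :
    ([m₁, m₂, m₁ * m₂, m₃, m₄, m₃ * m₄] : List (Ideal R)).Pairwise (· ≠ ·) ∧
    (∀ I ∈ ([m₁, m₂, m₁ * m₂, m₃, m₄, m₃ * m₄] : List (Ideal R)),
      I ≠ ⊤ ∧ ¬ I ≤ Ideal.jacobson (⊥ : Ideal R)) ∧
    (∀ I ∈ ([m₁, m₂, m₁ * m₂] : List (Ideal R)),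
      ∀ J ∈ ([m₃, m₄, m₃ * m₄] : List (Ideal R)), I ⊔ J = ⊤) := by
  have jle : ∀ {m : Ideal R}, m.IsMaximal → Ideal.jacobson (⊥ : Ideal R) ≤ m :=
    fun hm => sInf_le ⟨bot_le, hm⟩
  have pne : ∀ {a b p : Ideal R}, p.IsPrime → a ≠ p → b ≠ p → a.IsMaximal → b.IsMaximal →
      a * b ≠ p := fun hp ha hb hA hB h => prod_le_max hp ha hb hA hB (le_of_eq h)
  have e12 : m₁ * m₂ ≠ m₁ := prod_ne_self h₁ h₂ h₁₂
  have e21 : m₁ * m₂ ≠ m₂ := by rw [mul_comm]; exact prod_ne_self h₂ h₁ h₁₂.symm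
  have e34 : m₃ * m₄ ≠ m₃ := prod_ne_self h₃ h₄ h₃₄
  have e43 : m₃ * m₄ ≠ m₄ := by rw [mul_comm]; exact prod_ne_self h₄ h₃ h₃₄.symm
  have p3 : m₁ * m₂ ≠ m₃ := pne h₃.isPrime h₁₃ h₂₃ h₁ h₂
  have p4 : m₁ * m₂ ≠ m₄ := pne h₄.isPrime h₁₄ h₂₄ h₁ h₂
  have q1 : m₃ * m₄ ≠ m₁ := pne h₁.isPrime h₁₃.symm h₁₄.symm h₃ h₄
  have q2 : m₃ * m₄ ≠ m₂ := pne h₂.isPrime h₂₃.symm h₂₄.symm h₃ h₄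
  have pq : m₁ * m₂ ≠ m₃ * m₄ := fun h =>
    prod_le_max h₃.isPrime h₁₃ h₂₃ h₁ h₂ (h ▸ Ideal.mul_le_left)
  have c13 : IsCoprime m₁ m₃ := Ideal.isCoprime_iff_sup_eq.mpr <| Ideal.IsMaximal.coprime_of_ne h₁ h₃ h₁₃
  have c14 : IsCoprime m₁ m₄ := Ideal.isCoprime_iff_sup_eq.mpr <| Ideal.IsMaximal.coprime_of_ne h₁ h₄ h₁₄
  have c23 : IsCoprime m₂ m₃ := Ideal.isCoprime_iff_sup_eq.mpr <| Ideal.IsMaximal.coprime_of_ne h₂ h₃ h₂₃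
  have c24 : IsCoprime m₂ m₄ := Ideal.isCoprime_iff_sup_eq.mpr <| Ideal.IsMaximal.coprime_of_ne h₂ h₄ h₂₄
  have c134 : IsCoprime m₁ (m₃ * m₄) := c13.mul_right c14
  have c234 : IsCoprime m₂ (m₃ * m₄) := c23.mul_right c24
  have c123 : IsCoprime (m₁ * m₂) m₃ := c13.mul_left c23
  have c124 : IsCoprime (m₁ * m₂) m₄ := c14.mul_left c24
  have call : IsCoprime (m₁ * m₂) (m₃ * m₄) := c123.mul_right c124
  have nj : ∀ {a : Ideal R} {p : Ideal R}, p.IsMaximal → a ≠ p → a.IsMaximal →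
      ¬ a ≤ Ideal.jacobson (⊥ : Ideal R) := fun hp hap ha h =>
    hap (ha.eq_of_le hp.ne_top (h.trans (jle hp)))
  refine ⟨?_, ?_, ?_⟩
  · simp only [List.pairwise_cons, List.mem_cons, List.mem_singleton, List.not_mem_nil,
      List.Pairwise.nil, forall_eq_or_imp, forall_eq, or_false]
    exact ⟨⟨h₁₂, e12.symm, h₁₃, h₁₄, q1.symm⟩, ⟨e21.symm, h₂₃, h₂₄, q2.symm⟩,
      ⟨p3, p4, pq⟩, ⟨h₃₄, e34.symm⟩, e43.symm, fun _ h => h.elim, trivial⟩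
  · intro I hI
    simp only [List.mem_cons, List.not_mem_nil, or_false] at hI
    rcases hI with rfl | rfl | rfl | rfl | rfl | rfl
    · exact ⟨h₁.ne_top, nj h₂ h₁₂ h₁⟩
    · exact ⟨h₂.ne_top, nj h₁ h₁₂.symm h₂⟩
    · exact ⟨fun h => h₁.ne_top (top_le_iff.mp (h ▸ Ideal.mul_le_left : (⊤:Ideal R) ≤ m₁)),
        fun h => prod_le_max h₃.isPrime h₁₃ h₂₃ h₁ h₂ (h.trans (jle h₃))⟩
    · exact ⟨h₃.ne_top, nj h₁ h₁₃.symm h₃⟩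
    · exact ⟨h₄.ne_top, nj h₁ h₁₄.symm h₄⟩
    · exact ⟨fun h => h₃.ne_top (top_le_iff.mp (h ▸ Ideal.mul_le_left : (⊤:Ideal R) ≤ m₃)),
        fun h => prod_le_max h₁.isPrime h₁₃.symm h₁₄.symm h₃ h₄ (h.trans (jle h₁))⟩
  · intro I hI J hJ
    simp only [List.mem_cons, List.not_mem_nil, or_false] at hI hJ
    rcases hI with rfl | rfl | rfl <;> rcases hJ with rfl | rfl | rfl
    exacts [(Ideal.isCoprime_iff_sup_eq.mp c13), (Ideal.isCoprime_iff_sup_eq.mp c14),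
      (Ideal.isCoprime_iff_sup_eq.mp c134), (Ideal.isCoprime_iff_sup_eq.mp c23),
      (Ideal.isCoprime_iff_sup_eq.mp c24), (Ideal.isCoprime_iff_sup_eq.mp c234),
      (Ideal.isCoprime_iff_sup_eq.mp c123), (Ideal.isCoprime_iff_sup_eq.mp c124),
      (Ideal.isCoprime_iff_sup_eq.mp call)]
end

section
/- Let R₁, R₂, R₃ be nontrivial commutative rings with unity, let R = R₁ × R₂ × R₃, and let I and J be two distinct ideals of R₁ with 0 ≠ I ≠ R₁ and 0 ≠ J ≠ R₁. Then the six ideals I × R₂ × R₃, J × R₂ × R₃, 0 × R₂ × R₃, R₁ × 0 × R₃, R₁ × R₂ × 0, R₁ × 0 × 0 of R are pairwise distinct proper ideals not contained in J(R), and every ideal in the first three is comaximal with every ideal in the last three (their sum is R). In particular, Γ(R) contains K₃,₃ as a subgraph. -/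
/-- The ideal `A × B × C` of the ring `R₁ × R₂ × R₃`. -/
def idealProd3 {R₁ R₂ R₃ : Type} [CommRing R₁] [CommRing R₂] [CommRing R₃]
    (A : Ideal R₁) (B : Ideal R₂) (C : Ideal R₃) : Ideal (R₁ × R₂ × R₃) :=
  A.prod (B.prod C)

section Aux

variable {R₁ R₂ R₃ : Type} [CommRing R₁] [CommRing R₂] [CommRing R₃]

lemma mem_idealProd3 {A : Ideal R₁} {B : Ideal R₂} {C : Ideal R₃} {p : R₁ × R₂ × R₃} :
    p ∈ idealProd3 A B C ↔ p.1 ∈ A ∧ p.2.1 ∈ B ∧ p.2.2 ∈ C := by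
  obtain ⟨a, b, c⟩ := p
  simp [idealProd3, Ideal.mem_prod, and_assoc]

lemma idealProd3_fst {A A' : Ideal R₁} {B B' : Ideal R₂} {C C' : Ideal R₃}
    (h : idealProd3 A B C = idealProd3 A' B' C') : A = A' := by
  ext x
  have := SetLike.ext_iff.mp h (x, 0, 0)
  simpa [mem_idealProd3] using this

lemma idealProd3_snd {A A' : Ideal R₁} {B B' : Ideal R₂} {C C' : Ideal R₃}
    (h : idealProd3 A B C = idealProd3 A' B' C') : B = B' := by
  ext x
  have := SetLike.ext_iff.mp h (0, x, 0)
  simpa [mem_idealProd3] using this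

lemma idealProd3_trd {A A' : Ideal R₁} {B B' : Ideal R₂} {C C' : Ideal R₃}
    (h : idealProd3 A B C = idealProd3 A' B' C') : C = C' := by
  ext x
  have := SetLike.ext_iff.mp h (0, 0, x)
  simpa [mem_idealProd3] using this

lemma not_le_jacobson_aux {L : Ideal (R₁ × R₂ × R₃)} (w : R₁ × R₂ × R₃) (hw : w ∈ L)
    (hnu : ¬ IsUnit (1 - w)) :
    ¬ L ≤ Ideal.jacobson (⊥ : Ideal (R₁ × R₂ × R₃)) := by
  intro hle
  have hm := hle hw
  rw [Ideal.mem_jacobson_bot] at hm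
  have h := hm (-1)
  have he : w * (-1) + 1 = 1 - w := by ring
  rw [he] at h
  exact hnu h

lemma not_isUnit_snd [Nontrivial R₂] (p : R₁ × R₂ × R₃) (hp : p.2.1 = 0) : ¬ IsUnit p := by
  rintro ⟨u, rfl⟩
  have h2 := congrArg (fun q : R₁ × R₂ × R₃ => q.2.1) u.mul_inv
  simp only [Prod.snd_mul, Prod.fst_mul, Prod.snd_one, Prod.fst_one, hp, zero_mul] at h2
  exact zero_ne_one h2

lemma not_isUnit_fst [Nontrivial R₁] (p : R₁ × R₂ × R₃) (hp : p.1 = 0) : ¬ IsUnit p := by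
  rintro ⟨u, rfl⟩
  have h2 := congrArg (fun q : R₁ × R₂ × R₃ => q.1) u.mul_inv
  simp only [Prod.fst_mul, Prod.fst_one, hp, zero_mul] at h2
  exact zero_ne_one h2

lemma idealProd3_ne_top_fst {A : Ideal R₁} {B : Ideal R₂} {C : Ideal R₃}
    (hA : A ≠ ⊤) : idealProd3 A B C ≠ ⊤ := by
  intro h
  have h1 := (Ideal.eq_top_iff_one _).mp h
  rw [mem_idealProd3] at h1
  exact hA ((Ideal.eq_top_iff_one A).mpr h1.1)

lemma idealProd3_ne_top_snd {A : Ideal R₁} {B : Ideal R₂} {C : Ideal R₃}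
    (hB : B ≠ ⊤) : idealProd3 A B C ≠ ⊤ := by
  intro h
  have h1 := (Ideal.eq_top_iff_one _).mp h
  rw [mem_idealProd3] at h1
  exact hB ((Ideal.eq_top_iff_one B).mpr h1.2.1)

lemma idealProd3_ne_top_trd {A : Ideal R₁} {B : Ideal R₂} {C : Ideal R₃}
    (hC : C ≠ ⊤) : idealProd3 A B C ≠ ⊤ := by
  intro h
  have h1 := (Ideal.eq_top_iff_one _).mp h
  rw [mem_idealProd3] at h1
  exact hC ((Ideal.eq_top_iff_one C).mpr h1.2.2)

end Aux

/-- If `R = R₁ × R₂ × R₃` with the `Rᵢ` nontrivial commutative rings and `I, J` are two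
distinct nontrivial proper ideals of `R₁`, then the six ideals `I×R₂×R₃, J×R₂×R₃,
0×R₂×R₃, R₁×0×R₃, R₁×R₂×0, R₁×0×0` are pairwise distinct proper ideals of `R` not
contained in `J(R)`, and each of the first three is comaximal with each of the last
three; in particular `Γ(R)` contains `K₃,₃`. -/
theorem triple_product_K33
    (R₁ R₂ R₃ : Type) [CommRing R₁] [CommRing R₂] [CommRing R₃]
    [Nontrivial R₁] [Nontrivial R₂] [Nontrivial R₃]
    (I J : Ideal R₁) (hIJ : I ≠ J)
    (hI0 : I ≠ ⊥) (hItop : I ≠ ⊤) (hJ0 : J ≠ ⊥) (hJtop : J ≠ ⊤) :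
    ([idealProd3 I ⊤ ⊤, idealProd3 J ⊤ ⊤, idealProd3 ⊥ ⊤ ⊤,
      idealProd3 ⊤ ⊥ ⊤, idealProd3 ⊤ ⊤ ⊥, idealProd3 ⊤ ⊥ ⊥] :
      List (Ideal (R₁ × R₂ × R₃))).Pairwise (· ≠ ·) ∧
    (∀ L ∈ ([idealProd3 I ⊤ ⊤, idealProd3 J ⊤ ⊤, idealProd3 ⊥ ⊤ ⊤,
      idealProd3 ⊤ ⊥ ⊤, idealProd3 ⊤ ⊤ ⊥, idealProd3 ⊤ ⊥ ⊥] :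
      List (Ideal (R₁ × R₂ × R₃))),
      L ≠ ⊤ ∧ ¬ L ≤ Ideal.jacobson (⊥ : Ideal (R₁ × R₂ × R₃))) ∧
    (∀ A ∈ ([idealProd3 I ⊤ ⊤, idealProd3 J ⊤ ⊤, idealProd3 ⊥ ⊤ ⊤] :
      List (Ideal (R₁ × R₂ × R₃))),
      ∀ B ∈ ([idealProd3 ⊤ ⊥ ⊤, idealProd3 ⊤ ⊤ ⊥, idealProd3 ⊤ ⊥ ⊥] :
      List (Ideal (R₁ × R₂ × R₃))), A ⊔ B = ⊤) := by
  refine ⟨?_, ?_, ?_⟩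
  · -- pairwise distinct
    have d12 : idealProd3 I (⊤ : Ideal R₂) (⊤ : Ideal R₃) ≠ idealProd3 J ⊤ ⊤ :=
      fun h => hIJ (idealProd3_fst h)
    have d13 : idealProd3 I (⊤ : Ideal R₂) (⊤ : Ideal R₃) ≠ idealProd3 ⊥ ⊤ ⊤ :=
      fun h => hI0 (idealProd3_fst h)
    have d14 : idealProd3 I (⊤ : Ideal R₂) (⊤ : Ideal R₃) ≠ idealProd3 ⊤ ⊥ ⊤ :=
      fun h => hItop (idealProd3_fst h)
    have d15 : idealProd3 I (⊤ : Ideal R₂) (⊤ : Ideal R₃) ≠ idealProd3 ⊤ ⊤ ⊥ :=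
      fun h => hItop (idealProd3_fst h)
    have d16 : idealProd3 I (⊤ : Ideal R₂) (⊤ : Ideal R₃) ≠ idealProd3 ⊤ ⊥ ⊥ :=
      fun h => hItop (idealProd3_fst h)
    have d23 : idealProd3 J (⊤ : Ideal R₂) (⊤ : Ideal R₃) ≠ idealProd3 ⊥ ⊤ ⊤ :=
      fun h => hJ0 (idealProd3_fst h)
    have d24 : idealProd3 J (⊤ : Ideal R₂) (⊤ : Ideal R₃) ≠ idealProd3 ⊤ ⊥ ⊤ :=
      fun h => hJtop (idealProd3_fst h)
    have d25 : idealProd3 J (⊤ : Ideal R₂) (⊤ : Ideal R₃) ≠ idealProd3 ⊤ ⊤ ⊥ :=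
      fun h => hJtop (idealProd3_fst h)
    have d26 : idealProd3 J (⊤ : Ideal R₂) (⊤ : Ideal R₃) ≠ idealProd3 ⊤ ⊥ ⊥ :=
      fun h => hJtop (idealProd3_fst h)
    have d34 : idealProd3 (⊥ : Ideal R₁) (⊤ : Ideal R₂) (⊤ : Ideal R₃) ≠ idealProd3 ⊤ ⊥ ⊤ :=
      fun h => bot_ne_top (idealProd3_fst h)
    have d35 : idealProd3 (⊥ : Ideal R₁) (⊤ : Ideal R₂) (⊤ : Ideal R₃) ≠ idealProd3 ⊤ ⊤ ⊥ :=
      fun h => bot_ne_top (idealProd3_fst h)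
    have d36 : idealProd3 (⊥ : Ideal R₁) (⊤ : Ideal R₂) (⊤ : Ideal R₃) ≠ idealProd3 ⊤ ⊥ ⊥ :=
      fun h => bot_ne_top (idealProd3_fst h)
    have d45 : idealProd3 (⊤ : Ideal R₁) (⊥ : Ideal R₂) (⊤ : Ideal R₃) ≠ idealProd3 ⊤ ⊤ ⊥ :=
      fun h => bot_ne_top (idealProd3_snd h)
    have d46 : idealProd3 (⊤ : Ideal R₁) (⊥ : Ideal R₂) (⊤ : Ideal R₃) ≠ idealProd3 ⊤ ⊥ ⊥ :=
      fun h => bot_ne_top (idealProd3_trd h).symm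
    have d56 : idealProd3 (⊤ : Ideal R₁) (⊤ : Ideal R₂) (⊥ : Ideal R₃) ≠ idealProd3 ⊤ ⊥ ⊥ :=
      fun h => bot_ne_top (idealProd3_snd h).symm
    simp only [ne_eq, List.pairwise_cons, List.mem_cons, List.not_mem_nil, or_false,
      List.mem_singleton, forall_eq_or_imp, forall_eq, List.Pairwise.nil, and_true]
    exact ⟨⟨d12, d13, d14, d15, d16⟩, ⟨d23, d24, d25, d26⟩, ⟨d34, d35, d36⟩, ⟨d45, d46⟩, d56, fun _ h => h.elim⟩
  · -- proper, not in jacobson radical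
    intro L hL
    simp only [List.mem_cons, List.not_mem_nil, or_false, List.mem_singleton] at hL
    constructor
    · rcases hL with rfl | rfl | rfl | rfl | rfl | rfl
      · exact idealProd3_ne_top_fst hItop
      · exact idealProd3_ne_top_fst hJtop
      · exact idealProd3_ne_top_fst bot_ne_top
      · exact idealProd3_ne_top_snd bot_ne_top
      · exact idealProd3_ne_top_trd bot_ne_top
      · exact idealProd3_ne_top_snd bot_ne_top
    · have hu1 : ¬ IsUnit ((1 : R₁ × R₂ × R₃) - ((0 : R₁), (1 : R₂), (0 : R₃))) := by
        apply not_isUnit_snd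
        simp
      have hu2 : ¬ IsUnit ((1 : R₁ × R₂ × R₃) - ((1 : R₁), (0 : R₂), (0 : R₃))) := by
        apply not_isUnit_fst
        simp
      rcases hL with rfl | rfl | rfl | rfl | rfl | rfl
      · exact not_le_jacobson_aux _ (mem_idealProd3.mpr ⟨I.zero_mem, trivial, trivial⟩) hu1
      · exact not_le_jacobson_aux _ (mem_idealProd3.mpr ⟨J.zero_mem, trivial, trivial⟩) hu1
      · exact not_le_jacobson_aux _ (mem_idealProd3.mpr ⟨Submodule.zero_mem _, trivial, trivial⟩) hu1
      · exact not_le_jacobson_aux _ (mem_idealProd3.mpr ⟨trivial, Submodule.zero_mem _, Submodule.zero_mem _⟩) hu2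
      · exact not_le_jacobson_aux _ (mem_idealProd3.mpr ⟨trivial, trivial, Submodule.zero_mem _⟩) hu2
      · exact not_le_jacobson_aux _ (mem_idealProd3.mpr ⟨trivial, Submodule.zero_mem _, Submodule.zero_mem _⟩) hu2
  · -- comaximal
    intro A hA B hB
    simp only [List.mem_cons, List.not_mem_nil, or_false, List.mem_singleton] at hA hB
    rw [Ideal.eq_top_iff_one]
    have h1 : ((0 : R₁), (1 : R₂), (1 : R₃)) ∈ A := by
      rcases hA with rfl | rfl | rfl
      · exact mem_idealProd3.mpr ⟨I.zero_mem, trivial, trivial⟩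
      · exact mem_idealProd3.mpr ⟨J.zero_mem, trivial, trivial⟩
      · exact mem_idealProd3.mpr ⟨Submodule.zero_mem _, trivial, trivial⟩
    have h2 : ((1 : R₁), (0 : R₂), (0 : R₃)) ∈ B := by
      rcases hB with rfl | rfl | rfl
      · exact mem_idealProd3.mpr ⟨trivial, Submodule.zero_mem _, Submodule.zero_mem _⟩
      · exact mem_idealProd3.mpr ⟨trivial, trivial, Submodule.zero_mem _⟩
      · exact mem_idealProd3.mpr ⟨trivial, Submodule.zero_mem _, Submodule.zero_mem _⟩
    have he : (1 : R₁ × R₂ × R₃) =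
        ((0 : R₁), (1 : R₂), (1 : R₃)) + ((1 : R₁), (0 : R₂), (0 : R₃)) := by
      simp [Prod.ext_iff]
    rw [he]
    exact Submodule.add_mem_sup h1 h2
end
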